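/- arXiv:2504.21613 — 7 statements merged into one kernel-verified Lean document; each statement's English description precedes it below -/
import Mathlib

section
/- The control reproduction number is the spectral radius of the next-generation matrix: with Z the 3×3 matrix whose first row is (0, β·N1/N0, β·η·N1/N0) and whose other entries are zero, and W = [[k3,0,0],[−pγ,k4,0],[−qγ,−a2σ,k5]], the set of complex eigenvalues of Z·W⁻¹ is {0, R_c}, where R_c = N1·β·η·γ·(a2·p·σ + k4·q)/(N0·k3·k4·k5) + N1·β·p·γ/(N0·k3·k4); hence the spectral radius of Z·W⁻¹ equals R_c. -/
open Matrix

set_option maxHeartbeats 1000000 in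
/-- The control reproduction number is the spectral radius of the next-generation
matrix: the set of complex eigenvalues of `Z * W⁻¹` is `{0, R_c}`, hence its
spectral radius equals `R_c`. -/
theorem control_reproduction_number_spectral_radius
    (Λ μ β η γ σ θ δ c1 c2 r1 r2 p q a1 a2 φ1 φ2 : ℝ)
    (hΛ : 0 < Λ) (hμ : 0 < μ) (hβ : 0 < β) (hη : 0 < η) (hγ : 0 < γ)
    (hσ : 0 < σ) (hθ : 0 < θ) (hδ : 0 < δ) (hc1 : 0 < c1) (hc2 : 0 < c2)
    (hr1 : 0 < r1) (hr1' : r1 < 1) (hr2 : 0 < r2) (hr2' : r2 < 1)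
    (hp : 0 < p) (hp' : p < 1) (hq : 0 < q) (hq' : q < 1)
    (ha1 : 0 < a1) (ha1' : a1 < 1) (ha2 : 0 < a2) (ha2' : a2 < 1)
    (hr12 : r1 + r2 = 1) (hpq : p + q = 1) (ha12 : a1 + a2 = 1)
    (hφ1 : 0 ≤ φ1) (hφ1' : φ1 ≤ 1) (hφ2 : 0 ≤ φ2) (hφ2' : φ2 ≤ 1)
    (k1 k2 k3 k4 k5 k6 S0 V0 N0 N1 Rc : ℝ)
    (hk1 : k1 = c1 + μ) (hk2 : k2 = c2 + μ) (hk3 : k3 = μ + γ)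
    (hk4 : k4 = μ + σ) (hk5 : k5 = μ + δ + θ) (hk6 : k6 = k1 * k2 - c1 * c2)
    (hS0 : S0 = (c2 * r2 + r1 * k2) * Λ / k6)
    (hV0 : V0 = (k1 * r2 + c1 * r1) * Λ / k6)
    (hN0 : N0 = S0 + V0) (hN1 : N1 = S0 + φ1 * V0)
    (hRc : Rc = N1 * β * η * γ * (a2 * p * σ + k4 * q) / (N0 * k3 * k4 * k5)
        + N1 * β * p * γ / (N0 * k3 * k4))
    (Z W : Matrix (Fin 3) (Fin 3) ℝ)
    (hZ : Z = !![0, β * N1 / N0, β * η * N1 / N0; 0, 0, 0; 0, 0, 0])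
    (hW : W = !![k3, 0, 0; -(p * γ), k4, 0; -(q * γ), -(a2 * σ), k5]) :
    spectrum ℂ ((Z * W⁻¹).map (Complex.ofReal)) = {0, (Rc : ℂ)} ∧
    spectralRadius ℂ ((Z * W⁻¹).map (Complex.ofReal)) = ENNReal.ofReal Rc := by
  have hk1p : 0 < k1 := by rw [hk1]; positivity
  have hk2p : 0 < k2 := by rw [hk2]; positivity
  have hk3p : 0 < k3 := by rw [hk3]; positivity
  have hk4p : 0 < k4 := by rw [hk4]; positivity
  have hk5p : 0 < k5 := by rw [hk5]; positivity
  have hk6p : 0 < k6 := by rw [hk6, hk1, hk2]; nlinarith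
  have hS0p : 0 < S0 := by rw [hS0]; exact div_pos (by positivity) hk6p
  have hV0p : 0 < V0 := by rw [hV0]; exact div_pos (by positivity) hk6p
  have hN0p : 0 < N0 := by rw [hN0]; linarith
  have hN1p : 0 < N1 := by
    have : 0 ≤ φ1 * V0 := mul_nonneg hφ1 hV0p.le
    rw [hN1]; linarith
  have hRc0 : 0 ≤ Rc := by
    rw [hRc]
    have h1 : 0 ≤ N1 * β * η * γ * (a2 * p * σ + k4 * q) / (N0 * k3 * k4 * k5) := by
      apply div_nonneg <;> positivity
    have h2 : 0 ≤ N1 * β * p * γ / (N0 * k3 * k4) := by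
      apply div_nonneg <;> positivity
    linarith
  have hk3n := hk3p.ne'
  have hk4n := hk4p.ne'
  have hk5n := hk5p.ne'
  have hN0n := hN0p.ne'
  set Winv : Matrix (Fin 3) (Fin 3) ℝ :=
    !![1/k3, 0, 0;
       p*γ/(k3*k4), 1/k4, 0;
       q*γ/(k3*k5) + a2*σ*p*γ/(k3*k4*k5), a2*σ/(k4*k5), 1/k5] with hWinv
  have hWinvEq : W⁻¹ = Winv := by
    apply Matrix.inv_eq_right_inv
    rw [hW, hWinv, Matrix.mul_fin_three, Matrix.one_fin_three]
    ext i j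
    fin_cases i <;> fin_cases j <;>
      simp [Matrix.vecHead, Matrix.vecTail] <;> (try field_simp) <;> (try ring)
  have hM : Z * W⁻¹ =
      !![Rc, β*N1/N0 * (1/k4) + β*η*N1/N0 * (a2*σ/(k4*k5)), β*η*N1/N0 * (1/k5);
         0, 0, 0; 0, 0, 0] := by
    rw [hWinvEq, hZ, hWinv, Matrix.mul_fin_three]
    ext i j
    fin_cases i <;> fin_cases j <;>
      simp [Matrix.vecHead, Matrix.vecTail] <;> (try rw [hRc]) <;>
      (try field_simp) <;> (try ring)
  have hspec : spectrum ℂ ((Z * W⁻¹).map (Complex.ofReal)) = {0, (Rc : ℂ)} := by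
    ext z
    rw [spectrum.mem_iff]
    rw [Matrix.isUnit_iff_isUnit_det, isUnit_iff_ne_zero, not_not]
    have hdet : (algebraMap ℂ (Matrix (Fin 3) (Fin 3) ℂ) z -
        (Z * W⁻¹).map (Complex.ofReal)).det = (z - (Rc : ℂ)) * z * z := by
      rw [hM]
      simp [Matrix.det_fin_three, Matrix.algebraMap_matrix_apply, Matrix.map_apply,
        Matrix.vecHead, Matrix.vecTail]
      try ring
    rw [hdet]
    simp [Set.mem_insert_iff, mul_eq_zero, sub_eq_zero]
    tauto
  refine ⟨hspec, ?_⟩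
  rw [spectralRadius, hspec]
  rw [iSup_pair]
  simp [← Real.enorm_eq_ofReal hRc0, enorm_eq_nnnorm]
end

section
/- There exists a nonzero row vector w ∈ ℝ³ with all components nonnegative such that wᵀ·(W⁻¹·Z) = R_c·wᵀ, i.e. w is a nonnegative left eigenvector of the matrix W⁻¹·Z associated with the eigenvalue R_c. -/
open Matrix

set_option maxHeartbeats 1000000 in
/-- There exists a nonzero nonnegative row vector `w` with
`wᵀ (W⁻¹ Z) = R_c wᵀ`, i.e. a nonnegative left eigenvector of `W⁻¹ Z`
associated with the eigenvalue `R_c`. -/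
theorem exists_nonneg_left_eigenvector
    (Λ μ β η γ σ θ δ c1 c2 r1 r2 p q a1 a2 φ1 φ2 : ℝ)
    (hΛ : 0 < Λ) (hμ : 0 < μ) (hβ : 0 < β) (hη : 0 < η) (hγ : 0 < γ)
    (hσ : 0 < σ) (hθ : 0 < θ) (hδ : 0 < δ) (hc1 : 0 < c1) (hc2 : 0 < c2)
    (hr1 : 0 < r1) (hr1' : r1 < 1) (hr2 : 0 < r2) (hr2' : r2 < 1)
    (hp : 0 < p) (hp' : p < 1) (hq : 0 < q) (hq' : q < 1)
    (ha1 : 0 < a1) (ha1' : a1 < 1) (ha2 : 0 < a2) (ha2' : a2 < 1)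
    (hr12 : r1 + r2 = 1) (hpq : p + q = 1) (ha12 : a1 + a2 = 1)
    (hφ1 : 0 ≤ φ1) (hφ1' : φ1 ≤ 1) (hφ2 : 0 ≤ φ2) (hφ2' : φ2 ≤ 1)
    (k1 k2 k3 k4 k5 k6 S0 V0 N0 N1 Rc : ℝ)
    (hk1 : k1 = c1 + μ) (hk2 : k2 = c2 + μ) (hk3 : k3 = μ + γ)
    (hk4 : k4 = μ + σ) (hk5 : k5 = μ + δ + θ) (hk6 : k6 = k1 * k2 - c1 * c2)
    (hS0 : S0 = (c2 * r2 + r1 * k2) * Λ / k6)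
    (hV0 : V0 = (k1 * r2 + c1 * r1) * Λ / k6)
    (hN0 : N0 = S0 + V0) (hN1 : N1 = S0 + φ1 * V0)
    (hRc : Rc = N1 * β * η * γ * (a2 * p * σ + k4 * q) / (N0 * k3 * k4 * k5)
        + N1 * β * p * γ / (N0 * k3 * k4))
    (Z W : Matrix (Fin 3) (Fin 3) ℝ)
    (hZ : Z = !![0, β * N1 / N0, β * η * N1 / N0; 0, 0, 0; 0, 0, 0])
    (hW : W = !![k3, 0, 0; -(p * γ), k4, 0; -(q * γ), -(a2 * σ), k5]) :
    ∃ w : Fin 3 → ℝ, w ≠ 0 ∧ (∀ i, 0 ≤ w i) ∧ w ᵥ* (W⁻¹ * Z) = Rc • w := by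
  have hk3p : 0 < k3 := by rw [hk3]; linarith
  have hk4p : 0 < k4 := by rw [hk4]; linarith
  have hk5p : 0 < k5 := by rw [hk5]; linarith
  have hk3' := hk3p.ne'
  have hk4' := hk4p.ne'
  have hk5' := hk5p.ne'
  have hk6p : 0 < k6 := by rw [hk6, hk1, hk2]; nlinarith
  have hS0p : 0 < S0 := by rw [hS0, hk2]; positivity
  have hV0p : 0 < V0 := by rw [hV0, hk1]; positivity
  have hN0p : 0 < N0 := by rw [hN0]; linarith
  have hN1p : 0 < N1 := by rw [hN1]; nlinarith
  have hN0' := hN0p.ne'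
  have hinv : W⁻¹ =
      !![1/k3, 0, 0;
         p*γ/(k3*k4), 1/k4, 0;
         (q*γ*k4 + a2*σ*p*γ)/(k3*k4*k5), a2*σ/(k4*k5), 1/k5] := by
    apply Matrix.inv_eq_right_inv
    rw [hW]
    ext i j
    fin_cases i <;> fin_cases j <;>
      simp [Matrix.mul_apply, Fin.sum_univ_three] <;> field_simp <;> ring
  refine ⟨![0, 1, η], ?_, ?_, ?_⟩
  · intro h
    have := congrFun h 1
    simp at this
  · intro i
    fin_cases i
    · simp
    · simp
    · simpa using hη.le
  · rw [hinv]
    funext j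
    fin_cases j <;>
      simp [Matrix.vecMul, Matrix.mul_apply, Fin.sum_univ_three, dotProduct, hZ, hRc,
        Matrix.vecHead, Matrix.vecTail] <;> field_simp <;> ring
end

section
/- Lyapunov derivative identity: let (S,V,E,A,I,R) be a solution of the COVID-19 ODE model with N(t) > 0, and let w ∈ ℝ³ be a row vector satisfying wᵀ·(W⁻¹·Z) = R_c·wᵀ. Define Q(t) = wᵀ·W⁻¹·(E(t),A(t),I(t))ᵀ. Then Q is differentiable and Q'(t) = (R_c − 1)·wᵀ·(E(t),A(t),I(t))ᵀ − wᵀ·W⁻¹·M(t), where M(t) ∈ ℝ³ is the vector whose first component is β·(A(t)+η·I(t))·(N1/N0 − (S(t)+φ1·V(t)+φ2·R(t))/N(t)) and whose other two components are zero. -/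
open Matrix

/-- Lyapunov derivative identity: along a solution of the COVID-19 ODE model,
the function `Q(t) = wᵀ W⁻¹ (E,A,I)ᵀ` satisfies
`Q'(t) = (R_c - 1) wᵀ (E,A,I)ᵀ - wᵀ W⁻¹ M(t)`. -/
theorem lyapunov_derivative_identity
    (Λ μ β η γ σ θ δ c1 c2 r1 r2 p q a1 a2 φ1 φ2 : ℝ)
    (hΛ : 0 < Λ) (hμ : 0 < μ) (hβ : 0 < β) (hη : 0 < η) (hγ : 0 < γ)
    (hσ : 0 < σ) (hθ : 0 < θ) (hδ : 0 < δ) (hc1 : 0 < c1) (hc2 : 0 < c2)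
    (hr1 : 0 < r1) (hr1' : r1 < 1) (hr2 : 0 < r2) (hr2' : r2 < 1)
    (hp : 0 < p) (hp' : p < 1) (hq : 0 < q) (hq' : q < 1)
    (ha1 : 0 < a1) (ha1' : a1 < 1) (ha2 : 0 < a2) (ha2' : a2 < 1)
    (hr12 : r1 + r2 = 1) (hpq : p + q = 1) (ha12 : a1 + a2 = 1)
    (hφ1 : 0 ≤ φ1) (hφ1' : φ1 ≤ 1) (hφ2 : 0 ≤ φ2) (hφ2' : φ2 ≤ 1)
    (k1 k2 k3 k4 k5 k6 S0 V0 N0 N1 Rc : ℝ)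
    (hk1 : k1 = c1 + μ) (hk2 : k2 = c2 + μ) (hk3 : k3 = μ + γ)
    (hk4 : k4 = μ + σ) (hk5 : k5 = μ + δ + θ) (hk6 : k6 = k1 * k2 - c1 * c2)
    (hS0 : S0 = (c2 * r2 + r1 * k2) * Λ / k6)
    (hV0 : V0 = (k1 * r2 + c1 * r1) * Λ / k6)
    (hN0 : N0 = S0 + V0) (hN1 : N1 = S0 + φ1 * V0)
    (hRc : Rc = N1 * β * η * γ * (a2 * p * σ + k4 * q) / (N0 * k3 * k4 * k5)
        + N1 * β * p * γ / (N0 * k3 * k4))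
    (Z W : Matrix (Fin 3) (Fin 3) ℝ)
    (hZ : Z = !![0, β * N1 / N0, β * η * N1 / N0; 0, 0, 0; 0, 0, 0])
    (hW : W = !![k3, 0, 0; -(p * γ), k4, 0; -(q * γ), -(a2 * σ), k5])
    (S V E A I R N lam : ℝ → ℝ)
    (hN : ∀ t, N t = S t + V t + E t + A t + I t + R t)
    (hlam : ∀ t, lam t = β * (A t + η * I t) / N t)
    (hNpos : ∀ t, 0 < N t)
    (hS : ∀ t, HasDerivAt S (r1 * Λ + c2 * V t - (k1 + lam t) * S t) t)
    (hV : ∀ t, HasDerivAt V (r2 * Λ + c1 * S t - (k2 + φ1 * lam t) * V t) t)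
    (hE : ∀ t, HasDerivAt E (lam t * (S t + φ1 * V t + φ2 * R t) - k3 * E t) t)
    (hA : ∀ t, HasDerivAt A (p * γ * E t - k4 * A t) t)
    (hI : ∀ t, HasDerivAt I (q * γ * E t + a2 * σ * A t - k5 * I t) t)
    (hR : ∀ t, HasDerivAt R (a1 * σ * A t + θ * I t - (μ + φ2 * lam t) * R t) t)
    (w : Fin 3 → ℝ) (hw : w ᵥ* (W⁻¹ * Z) = Rc • w)
    (Q : ℝ → ℝ)
    (hQ : ∀ t, Q t = (w ᵥ* W⁻¹) ⬝ᵥ ![E t, A t, I t])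
    (M : ℝ → Fin 3 → ℝ)
    (hM : ∀ t, M t =
      ![β * (A t + η * I t) *
          (N1 / N0 - (S t + φ1 * V t + φ2 * R t) / N t), 0, 0]) :
    ∀ t, HasDerivAt Q
      ((Rc - 1) * (w ⬝ᵥ ![E t, A t, I t]) - (w ᵥ* W⁻¹) ⬝ᵥ M t) t := by
  intro t
  set u : Fin 3 → ℝ := w ᵥ* W⁻¹ with hu
  have hdet : W.det = k3 * k4 * k5 := by
    subst hW; simp [Matrix.det_fin_three]
  have hk3p : (0:ℝ) < k3 := by rw [hk3]; positivity
  have hk4p : (0:ℝ) < k4 := by rw [hk4]; positivity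
  have hk5p : (0:ℝ) < k5 := by rw [hk5]; positivity
  have hdet0 : IsUnit W.det := by
    rw [hdet]; exact (by positivity : (0:ℝ) < k3*k4*k5).ne'.isUnit
  have huW : u ᵥ* W = w := by
    rw [hu, Matrix.vecMul_vecMul, Matrix.nonsing_inv_mul W hdet0, Matrix.vecMul_one]
  have huZ : u ᵥ* Z = Rc • w := by rw [hu, Matrix.vecMul_vecMul]; exact hw
  have e1 : u 0 * k3 + u 1 * -(p*γ) + u 2 * -(q*γ) = w 0 := by
    have := congrFun huW 0
    simpa [hW, Matrix.vecMul, dotProduct, Fin.sum_univ_three, Matrix.vecHead, Matrix.vecTail] using this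
  have e2 : u 1 * k4 + u 2 * -(a2*σ) = w 1 := by
    have := congrFun huW 1
    simpa [hW, Matrix.vecMul, dotProduct, Fin.sum_univ_three, Matrix.vecHead, Matrix.vecTail] using this
  have e3 : u 2 * k5 = w 2 := by
    have := congrFun huW 2
    simpa [hW, Matrix.vecMul, dotProduct, Fin.sum_univ_three, Matrix.vecHead, Matrix.vecTail] using this
  have f1 : (0:ℝ) = Rc * w 0 := by
    have := congrFun huZ 0
    simpa [hZ, Matrix.vecMul, dotProduct, Fin.sum_univ_three, Matrix.vecHead, Matrix.vecTail] using this
  have f2 : u 0 * (β * N1 / N0) = Rc * w 1 := by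
    have := congrFun huZ 1
    simpa [hZ, Matrix.vecMul, dotProduct, Fin.sum_univ_three, Matrix.vecHead, Matrix.vecTail] using this
  have f3 : u 0 * (β * η * N1 / N0) = Rc * w 2 := by
    have := congrFun huZ 2
    simpa [hZ, Matrix.vecMul, dotProduct, Fin.sum_univ_three, Matrix.vecHead, Matrix.vecTail] using this
  have hQfun : Q = fun s => u 0 * E s + u 1 * A s + u 2 * I s := by
    funext s
    rw [hQ s]
    simp [dotProduct, Fin.sum_univ_three]
  have hd : HasDerivAt (fun s => u 0 * E s + u 1 * A s + u 2 * I s)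
      (u 0 * (lam t * (S t + φ1 * V t + φ2 * R t) - k3 * E t)
        + u 1 * (p * γ * E t - k4 * A t)
        + u 2 * (q * γ * E t + a2 * σ * A t - k5 * I t)) t :=
    (((hE t).const_mul (u 0)).add ((hA t).const_mul (u 1))).add ((hI t).const_mul (u 2))
  rw [hQfun]
  convert hd using 1
  have hNne : N t ≠ 0 := (hNpos t).ne'
  have hg : lam t = β * (A t + η * I t) / N t := hlam t
  have hdot1 : w ⬝ᵥ ![E t, A t, I t] = w 0 * E t + w 1 * A t + w 2 * I t := by
    simp [dotProduct, Fin.sum_univ_three]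
  have hdot2 : u ⬝ᵥ M t = u 0 * (β * (A t + η * I t) *
      (N1 / N0 - (S t + φ1 * V t + φ2 * R t) / N t)) := by
    rw [hM t]; simp [dotProduct, Fin.sum_univ_three]
  rw [hdot1, hdot2, hg]
  linear_combination (E t) * e1 - (E t) * f1 + (A t) * e2 - (A t) * f2
    + (I t) * e3 - (I t) * f3
end

section
/- Global asymptotic stability of the disease-free equilibrium (ODE model): suppose R_c < 1, and let (S,V,E,A,I,R) : [0,∞) → ℝ⁶ be a solution of the COVID-19 ODE model whose components are nonnegative with 0 < N(t) ≤ Λ/μ for all t ≥ 0, and which satisfies N1/N0 − (S(t)+φ1·V(t)+φ2·R(t))/N(t) ≥ 0 for all t ≥ 0. Then (S(t), V(t), E(t), A(t), I(t), R(t)) → (S0, V0, 0, 0, 0, 0) as t → ∞. -/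
set_option maxHeartbeats 1000000
open Filter Real Set

lemma le_init (f f' : ℝ → ℝ)
    (hf : ∀ t, 0 ≤ t → HasDerivAt f (f' t) t)
    (h : ∀ t, 0 ≤ t → f' t ≤ 0) : ∀ t, 0 ≤ t → f t ≤ f 0 := by
  intro t ht
  have hA : AntitoneOn f (Set.Ici (0:ℝ)) := by
    apply antitoneOn_of_deriv_nonpos (convex_Ici 0)
    · intro x hx; exact (hf x hx).continuousAt.continuousWithinAt
    · intro x hx
      rw [interior_Ici] at hx
      exact (hf x hx.le).differentiableAt.differentiableWithinAt
    · intro x hx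
      rw [interior_Ici] at hx
      rw [(hf x hx.le).deriv]; exact h x hx.le
  exact hA Set.self_mem_Ici ht ht

lemma exp_upper (x x' : ℝ → ℝ) (κ ε D : ℝ) (hε : 0 < ε) (hεκ : ε < κ) (hD : 0 ≤ D)
    (hx : ∀ t, 0 ≤ t → HasDerivAt x (x' t) t)
    (hle : ∀ t, 0 ≤ t → x' t ≤ -κ * x t + D * Real.exp (-ε * t)) :
    ∃ B, 0 ≤ B ∧ ∀ t, 0 ≤ t → x t ≤ B * Real.exp (-ε * t) := by
  have hκε : 0 < κ - ε := by linarith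
  set c : ℝ := D / (κ - ε) with hc
  have hc0 : 0 ≤ c := div_nonneg hD hκε.le
  refine ⟨|x 0 - c| + c, by positivity, ?_⟩
  intro t ht
  set m : ℝ → ℝ := fun t => x t * Real.exp (κ * t) - c * Real.exp ((κ - ε) * t) with hm
  have hexpd : ∀ (r s : ℝ), HasDerivAt (fun u => Real.exp (r * u)) (Real.exp (r * s) * r) s := by
    intro r s
    simpa using ((hasDerivAt_id s).const_mul r).exp
  have hmder : ∀ u, 0 ≤ u → HasDerivAt m
      (x' u * Real.exp (κ * u) + x u * (Real.exp (κ * u) * κ)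
        - c * (Real.exp ((κ - ε) * u) * (κ - ε))) u := by
    intro u hu
    exact ((hx u hu).mul (hexpd κ u)).sub ((hexpd (κ - ε) u).const_mul c)
  have hmle : ∀ u, 0 ≤ u → x' u * Real.exp (κ * u) + x u * (Real.exp (κ * u) * κ)
      - c * (Real.exp ((κ - ε) * u) * (κ - ε)) ≤ 0 := by
    intro u hu
    have h1 := hle u hu
    have h2 : x' u * Real.exp (κ * u) ≤ (-κ * x u + D * Real.exp (-ε * u)) * Real.exp (κ * u) :=
      mul_le_mul_of_nonneg_right h1 (Real.exp_pos _).le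
    have h3 : Real.exp (-ε * u) * Real.exp (κ * u) = Real.exp ((κ - ε) * u) := by
      rw [← Real.exp_add]; ring_nf
    have h4 : c * (κ - ε) = D := div_mul_cancel₀ D hκε.ne'
    have h2' : x' u * Real.exp (κ * u) ≤ -κ * x u * Real.exp (κ * u) + D * Real.exp ((κ - ε) * u) := by
      calc x' u * Real.exp (κ * u) ≤ (-κ * x u + D * Real.exp (-ε * u)) * Real.exp (κ * u) := h2
        _ = -κ * x u * Real.exp (κ * u) + D * (Real.exp (-ε * u) * Real.exp (κ * u)) := by ring
        _ = -κ * x u * Real.exp (κ * u) + D * Real.exp ((κ - ε) * u) := by rw [h3]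
    have h4' : c * (Real.exp ((κ - ε) * u) * (κ - ε)) = D * Real.exp ((κ - ε) * u) := by
      calc c * (Real.exp ((κ - ε) * u) * (κ - ε)) = (c * (κ - ε)) * Real.exp ((κ - ε) * u) := by ring
        _ = D * Real.exp ((κ - ε) * u) := by rw [h4]
    linarith [h2', h4']
  have hmono := le_init m _ hmder hmle
  have hm0 : m 0 = x 0 - c := by simp [hm]
  have h5 : x t * Real.exp (κ * t) ≤ x 0 - c + c * Real.exp ((κ - ε) * t) := by
    have := hmono t ht; rw [hm0] at this; simp only [hm] at this; linarith
  have hek : (0:ℝ) < Real.exp (κ * t) := Real.exp_pos _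
  have h6 : x t ≤ (x 0 - c) * Real.exp (-κ * t) + c * Real.exp (-ε * t) := by
    have h7 := mul_le_mul_of_nonneg_right h5 (Real.exp_pos (-κ * t)).le
    have e1 : Real.exp (κ * t) * Real.exp (-κ * t) = 1 := by
      rw [← Real.exp_add]; ring_nf; exact Real.exp_zero
    have e2 : Real.exp ((κ - ε) * t) * Real.exp (-κ * t) = Real.exp (-ε * t) := by
      rw [← Real.exp_add]; ring_nf
    calc x t = x t * Real.exp (κ * t) * Real.exp (-κ * t) := by
          rw [mul_assoc, e1, mul_one]
      _ ≤ (x 0 - c + c * Real.exp ((κ - ε) * t)) * Real.exp (-κ * t) := h7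
      _ = (x 0 - c) * Real.exp (-κ * t) + c * (Real.exp ((κ - ε) * t) * Real.exp (-κ * t)) := by ring
      _ = (x 0 - c) * Real.exp (-κ * t) + c * Real.exp (-ε * t) := by rw [e2]
  have h8 : (x 0 - c) * Real.exp (-κ * t) ≤ |x 0 - c| * Real.exp (-ε * t) := by
    have : Real.exp (-κ * t) ≤ Real.exp (-ε * t) := by
      apply Real.exp_le_exp.2; nlinarith
    calc (x 0 - c) * Real.exp (-κ * t) ≤ |x 0 - c| * Real.exp (-κ * t) :=
          mul_le_mul_of_nonneg_right (le_abs_self _) (Real.exp_pos _).le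
      _ ≤ |x 0 - c| * Real.exp (-ε * t) :=
          mul_le_mul_of_nonneg_left this (abs_nonneg _)
  calc x t ≤ (x 0 - c) * Real.exp (-κ * t) + c * Real.exp (-ε * t) := h6
    _ ≤ |x 0 - c| * Real.exp (-ε * t) + c * Real.exp (-ε * t) := by linarith
    _ = (|x 0 - c| + c) * Real.exp (-ε * t) := by ring

lemma tendsto_expdecay (ε B : ℝ) (hε : 0 < ε) :
    Tendsto (fun t => B * Real.exp (-ε * t)) atTop (nhds 0) := by
  have h1 : Tendsto (fun t : ℝ => ε * t) atTop atTop :=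
    Tendsto.const_mul_atTop hε tendsto_id
  have h2 : Tendsto (fun t : ℝ => Real.exp (-(ε * t))) atTop (nhds 0) :=
    Real.tendsto_exp_neg_atTop_nhds_zero.comp h1
  have := h2.const_mul B
  simpa [neg_mul] using this

lemma tendsto_zero_of_expbound (x : ℝ → ℝ) (ε B1 B2 : ℝ) (hε : 0 < ε)
    (h1 : ∀ t, 0 ≤ t → -(B2 * Real.exp (-ε * t)) ≤ x t)
    (h2 : ∀ t, 0 ≤ t → x t ≤ B1 * Real.exp (-ε * t)) :
    Tendsto x atTop (nhds 0) := by
  have hlo : Tendsto (fun t => -(B2 * Real.exp (-ε * t))) atTop (nhds 0) := by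
    simpa using (tendsto_expdecay ε B2 hε).neg
  have hhi := tendsto_expdecay ε B1 hε
  apply tendsto_of_tendsto_of_tendsto_of_le_of_le' hlo hhi
  · exact eventually_atTop.2 ⟨0, h1⟩
  · exact eventually_atTop.2 ⟨0, h2⟩


/-- Global asymptotic stability of the disease-free equilibrium of the COVID-19 ODE
model: if `R_c < 1` and the solution stays nonnegative in the feasible region with
`N1/N0 - (S + φ1 V + φ2 R)/N ≥ 0`, then the solution converges to the DFE. -/
theorem dfe_globally_asymptotically_stable
    (Λ μ β η γ σ θ δ c1 c2 r1 r2 p q a1 a2 φ1 φ2 : ℝ)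
    (hΛ : 0 < Λ) (hμ : 0 < μ) (hβ : 0 < β) (hη : 0 < η) (hγ : 0 < γ)
    (hσ : 0 < σ) (hθ : 0 < θ) (hδ : 0 < δ) (hc1 : 0 < c1) (hc2 : 0 < c2)
    (hr1 : 0 < r1) (hr1' : r1 < 1) (hr2 : 0 < r2) (hr2' : r2 < 1)
    (hp : 0 < p) (hp' : p < 1) (hq : 0 < q) (hq' : q < 1)
    (ha1 : 0 < a1) (ha1' : a1 < 1) (ha2 : 0 < a2) (ha2' : a2 < 1)
    (hr12 : r1 + r2 = 1) (hpq : p + q = 1) (ha12 : a1 + a2 = 1)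
    (hφ1 : 0 ≤ φ1) (hφ1' : φ1 ≤ 1) (hφ2 : 0 ≤ φ2) (hφ2' : φ2 ≤ 1)
    (k1 k2 k3 k4 k5 k6 S0 V0 N0 N1 Rc : ℝ)
    (hk1 : k1 = c1 + μ) (hk2 : k2 = c2 + μ) (hk3 : k3 = μ + γ)
    (hk4 : k4 = μ + σ) (hk5 : k5 = μ + δ + θ) (hk6 : k6 = k1 * k2 - c1 * c2)
    (hS0 : S0 = (c2 * r2 + r1 * k2) * Λ / k6)
    (hV0 : V0 = (k1 * r2 + c1 * r1) * Λ / k6)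
    (hN0 : N0 = S0 + V0) (hN1 : N1 = S0 + φ1 * V0)
    (hRc : Rc = N1 * β * η * γ * (a2 * p * σ + k4 * q) / (N0 * k3 * k4 * k5)
        + N1 * β * p * γ / (N0 * k3 * k4))
    (hRclt : Rc < 1)
    (S V E A I R N lam : ℝ → ℝ)
    (hN : ∀ t, N t = S t + V t + E t + A t + I t + R t)
    (hlam : ∀ t, lam t = β * (A t + η * I t) / N t)
    (hS : ∀ t, 0 ≤ t → HasDerivAt S (r1 * Λ + c2 * V t - (k1 + lam t) * S t) t)
    (hV : ∀ t, 0 ≤ t → HasDerivAt V (r2 * Λ + c1 * S t - (k2 + φ1 * lam t) * V t) t)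
    (hE : ∀ t, 0 ≤ t →
      HasDerivAt E (lam t * (S t + φ1 * V t + φ2 * R t) - k3 * E t) t)
    (hA : ∀ t, 0 ≤ t → HasDerivAt A (p * γ * E t - k4 * A t) t)
    (hI : ∀ t, 0 ≤ t → HasDerivAt I (q * γ * E t + a2 * σ * A t - k5 * I t) t)
    (hR : ∀ t, 0 ≤ t →
      HasDerivAt R (a1 * σ * A t + θ * I t - (μ + φ2 * lam t) * R t) t)
    (hnonneg : ∀ t, 0 ≤ t →
      0 ≤ S t ∧ 0 ≤ V t ∧ 0 ≤ E t ∧ 0 ≤ A t ∧ 0 ≤ I t ∧ 0 ≤ R t)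
    (hNbound : ∀ t, 0 ≤ t → 0 < N t ∧ N t ≤ Λ / μ)
    (hcond : ∀ t, 0 ≤ t →
      0 ≤ N1 / N0 - (S t + φ1 * V t + φ2 * R t) / N t) :
    Tendsto S atTop (nhds S0) ∧ Tendsto V atTop (nhds V0) ∧
    Tendsto E atTop (nhds 0) ∧ Tendsto A atTop (nhds 0) ∧
    Tendsto I atTop (nhds 0) ∧ Tendsto R atTop (nhds 0) := by
  -- basic positivity
  have hk1p : 0 < k1 := by rw [hk1]; positivity
  have hk2p : 0 < k2 := by rw [hk2]; positivity
  have hk3p : 0 < k3 := by rw [hk3]; positivity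
  have hk4p : 0 < k4 := by rw [hk4]; positivity
  have hk5p : 0 < k5 := by rw [hk5]; positivity
  have hk6' : k6 = μ * (c1 + c2 + μ) := by rw [hk6, hk1, hk2]; ring
  have hk6p : 0 < k6 := by rw [hk6']; positivity
  have hS0p : 0 < S0 := by
    rw [hS0]
    exact div_pos (mul_pos (add_pos (mul_pos hc2 hr2) (mul_pos hr1 hk2p)) hΛ) hk6p
  have hV0p : 0 < V0 := by
    rw [hV0]
    exact div_pos (mul_pos (add_pos (mul_pos hk1p hr2) (mul_pos hc1 hr1)) hΛ) hk6p
  have hN0p : 0 < N0 := by rw [hN0]; linarith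
  have hN1p : 0 < N1 := by
    rw [hN1]
    have := mul_nonneg hφ1 hV0p.le
    linarith
  have hDFE1 : k1 * S0 = r1 * Λ + c2 * V0 := by
    have h : k1 * S0 - c2 * V0 = r1 * Λ := by
      rw [hS0, hV0, ← mul_div_assoc, ← mul_div_assoc, div_sub_div_same]
      rw [show k1 * ((c2 * r2 + r1 * k2) * Λ) - c2 * ((k1 * r2 + c1 * r1) * Λ)
          = (r1 * Λ) * k6 by rw [hk6]; ring]
      exact mul_div_cancel_right₀ _ hk6p.ne'
    linarith only [h]
  have hDFE2 : k2 * V0 = r2 * Λ + c1 * S0 := by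
    have h : k2 * V0 - c1 * S0 = r2 * Λ := by
      rw [hS0, hV0, ← mul_div_assoc, ← mul_div_assoc, div_sub_div_same]
      rw [show k2 * ((k1 * r2 + c1 * r1) * Λ) - c1 * ((c2 * r2 + r1 * k2) * Λ)
          = (r2 * Λ) * k6 by rw [hk6]; ring]
      exact mul_div_cancel_right₀ _ hk6p.ne'
    linarith only [h]
  have hΛeq : Λ = μ * (S0 + V0) := by
    linear_combination -hDFE1 - hDFE2 + S0 * hk1 + V0 * hk2 - Λ * hr12
  -- Lyapunov coefficients (opaque definitions)
  obtain ⟨i0, hi0⟩ : ∃ x : ℝ, x = β * η * N1 / (N0 * k5) := ⟨_, rfl⟩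
  obtain ⟨a0, ha0⟩ : ∃ x : ℝ, x = (β * N1 / N0 + a2 * σ * i0) / k4 := ⟨_, rfl⟩
  obtain ⟨s, hs⟩ : ∃ x : ℝ, x = k3 * (1 - Rc) / (2 * γ) := ⟨_, rfl⟩
  have hi0p : 0 < i0 := by
    rw [hi0]
    exact div_pos (mul_pos (mul_pos hβ hη) hN1p) (mul_pos hN0p hk5p)
  have ha0p : 0 < a0 := by
    rw [ha0]
    exact div_pos (add_pos (div_pos (mul_pos hβ hN1p) hN0p)
      (mul_pos (mul_pos ha2 hσ) hi0p)) hk4p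
  have hsp : 0 < s := by
    rw [hs]
    exact div_pos (mul_pos hk3p (by linarith only [hRclt])) (by positivity)
  obtain ⟨aa, haa⟩ : ∃ x : ℝ, x = a0 + s := ⟨_, rfl⟩
  obtain ⟨ii, hii⟩ : ∃ x : ℝ, x = i0 + s := ⟨_, rfl⟩
  have haap : 0 < aa := by rw [haa]; linarith
  have hiip : 0 < ii := by rw [hii]; linarith
  have hk5i0 : k5 * i0 = β * η * N1 / N0 := by
    rw [hi0]; field_simp
  have hk4a0 : k4 * a0 = β * N1 / N0 + a2 * σ * i0 := by
    rw [ha0]; field_simp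
  have hcoefI : β * η * N1 / N0 - k5 * ii = -(k5 * s) := by
    rw [hii]; linear_combination -hk5i0
  have hcoefA : β * N1 / N0 + a2 * σ * ii - k4 * aa = -((μ + a1 * σ) * s) := by
    rw [hii, haa]; linear_combination -hk4a0 - s * hk4 + σ * s * ha12
  have hγs : γ * s = k3 * (1 - Rc) / 2 := by
    rw [hs]; field_simp
  have hRcid : γ * (p * a0 + q * i0) = k3 * Rc := by
    rw [ha0, hi0, hRc]; field_simp; ring
  have hcoefE : γ * (p * aa + q * ii) - k3 = -(k3 * (1 - Rc) / 2) := by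
    rw [haa, hii]; linear_combination hRcid + hγs + γ * s * hpq
  -- decay rates
  obtain ⟨ε1, hε1⟩ : ∃ x : ℝ,
      x = min (k3 * (1 - Rc) / 2) (min ((μ + a1 * σ) * s / aa) (k5 * s / ii)) := ⟨_, rfl⟩
  have hε1p : 0 < ε1 := by
    rw [hε1]
    refine lt_min (div_pos (mul_pos hk3p (by linarith only [hRclt])) (by norm_num))
      (lt_min ?_ ?_)
    · exact div_pos (mul_pos (add_pos hμ (mul_pos ha1 hσ)) hsp) haap
    · exact div_pos (mul_pos hk5p hsp) hiip
  have hε1E : ε1 ≤ k3 * (1 - Rc) / 2 := by rw [hε1]; exact min_le_left _ _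
  have hε1A : ε1 * aa ≤ (μ + a1 * σ) * s := by
    rw [← le_div_iff₀ haap]
    rw [hε1]
    exact le_trans (min_le_right _ _) (min_le_left _ _)
  have hε1I : ε1 * ii ≤ k5 * s := by
    rw [← le_div_iff₀ hiip]
    rw [hε1]
    exact le_trans (min_le_right _ _) (min_le_right _ _)
  obtain ⟨ε, hεdef⟩ : ∃ x : ℝ, x = min ε1 μ / 2 := ⟨_, rfl⟩
  have hεp : 0 < ε := by
    rw [hεdef]
    exact div_pos (lt_min hε1p hμ) (by norm_num)
  have hεε1 : ε < ε1 := by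
    have h1 : min ε1 μ ≤ ε1 := min_le_left _ _
    rw [hεdef]; linarith only [h1, hε1p]
  have hεμ : ε < μ := by
    have h1 : min ε1 μ ≤ μ := min_le_right _ _
    rw [hεdef]; linarith only [h1, hμ]
  -- the Lyapunov function
  obtain ⟨L, hLdef⟩ : ∃ f : ℝ → ℝ, f = fun t => E t + aa * A t + ii * I t := ⟨_, rfl⟩
  obtain ⟨L', hL'def⟩ : ∃ f : ℝ → ℝ, f = fun t =>
      (lam t * (S t + φ1 * V t + φ2 * R t) - k3 * E t)
      + aa * (p * γ * E t - k4 * A t)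
      + ii * (q * γ * E t + a2 * σ * A t - k5 * I t) := ⟨_, rfl⟩
  have hLt : ∀ t, L t = E t + aa * A t + ii * I t := by intro t; rw [hLdef]
  have hL't : ∀ t, L' t = (lam t * (S t + φ1 * V t + φ2 * R t) - k3 * E t)
      + aa * (p * γ * E t - k4 * A t)
      + ii * (q * γ * E t + a2 * σ * A t - k5 * I t) := by intro t; rw [hL'def]
  have hLder : ∀ t, 0 ≤ t → HasDerivAt L (L' t) t := by
    intro t ht
    rw [hLdef, hL't]
    exact ((hE t ht).add ((hA t ht).const_mul aa)).add ((hI t ht).const_mul ii)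
  have hLle : ∀ t, 0 ≤ t → L' t ≤ -ε1 * L t + 0 * Real.exp (-ε * t) := by
    intro t ht
    obtain ⟨hSnn, hVnn, hEnn, hAnn, hInn, hRnn⟩ := hnonneg t ht
    have hNpos := (hNbound t ht).1
    have hAI : 0 ≤ A t + η * I t := add_nonneg hAnn (mul_nonneg hη.le hInn)
    have hXle : (S t + φ1 * V t + φ2 * R t) / N t ≤ N1 / N0 := by
      have := hcond t ht; linarith only [this]
    have key : lam t * (S t + φ1 * V t + φ2 * R t)
        ≤ β * (A t + η * I t) * (N1 / N0) := by
      have heq : lam t * (S t + φ1 * V t + φ2 * R t)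
          = β * (A t + η * I t) * ((S t + φ1 * V t + φ2 * R t) / N t) := by
        rw [hlam t]; ring
      rw [heq]
      exact mul_le_mul_of_nonneg_left hXle (mul_nonneg hβ.le hAI)
    have hEe : -(k3 * (1 - Rc) / 2) * E t ≤ -ε1 * E t := by
      linarith only [mul_nonneg (sub_nonneg.2 hε1E) hEnn]
    have hAe : -((μ + a1 * σ) * s) * A t ≤ -ε1 * (aa * A t) := by
      linarith only [mul_nonneg (sub_nonneg.2 hε1A) hAnn]
    have hIe : -(k5 * s) * I t ≤ -ε1 * (ii * I t) := by
      linarith only [mul_nonneg (sub_nonneg.2 hε1I) hInn]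
    have hexpand : β * (A t + η * I t) * (N1 / N0) - k3 * E t
        + aa * (p * γ * E t - k4 * A t) + ii * (q * γ * E t + a2 * σ * A t - k5 * I t)
        = (γ * (p * aa + q * ii) - k3) * E t
        + (β * N1 / N0 + a2 * σ * ii - k4 * aa) * A t
        + (β * η * N1 / N0 - k5 * ii) * I t := by ring
    have hmain : L' t ≤ (γ * (p * aa + q * ii) - k3) * E t
        + (β * N1 / N0 + a2 * σ * ii - k4 * aa) * A t
        + (β * η * N1 / N0 - k5 * ii) * I t := by
      rw [hL't]
      linarith only [key, hexpand.le, hexpand.ge]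
    rw [hcoefE, hcoefA, hcoefI] at hmain
    have hLeq : -ε1 * L t = -ε1 * E t + -ε1 * (aa * A t) + -ε1 * (ii * I t) := by
      rw [hLt]; ring
    rw [hLeq]
    have hz : (0:ℝ) * Real.exp (-ε * t) = 0 := by ring
    rw [hz, add_zero]
    linarith only [hEe, hAe, hIe, hmain]
  obtain ⟨BL, hBL0, hBL⟩ := exp_upper L L' ε1 ε 0 hεp hεε1 le_rfl hLder hLle
  -- individual bounds on E, A, I
  have hEb : ∀ t, 0 ≤ t → E t ≤ BL * Real.exp (-ε * t) := by
    intro t ht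
    obtain ⟨_, _, _, hAnn, hInn, _⟩ := hnonneg t ht
    have h := hBL t ht
    rw [hLt] at h
    linarith only [h, mul_nonneg haap.le hAnn, mul_nonneg hiip.le hInn]
  have hAb : ∀ t, 0 ≤ t → A t ≤ BL / aa * Real.exp (-ε * t) := by
    intro t ht
    obtain ⟨_, _, hEnn, _, hInn, _⟩ := hnonneg t ht
    have h := hBL t ht
    rw [hLt] at h
    have h2 : aa * A t ≤ BL * Real.exp (-ε * t) := by
      linarith only [h, mul_nonneg hiip.le hInn, hEnn]
    rw [div_mul_eq_mul_div, le_div_iff₀ haap]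
    linarith only [h2]
  have hIb : ∀ t, 0 ≤ t → I t ≤ BL / ii * Real.exp (-ε * t) := by
    intro t ht
    obtain ⟨_, _, hEnn, hAnn, _, _⟩ := hnonneg t ht
    have h := hBL t ht
    rw [hLt] at h
    have h2 : ii * I t ≤ BL * Real.exp (-ε * t) := by
      linarith only [h, mul_nonneg haap.le hAnn, hEnn]
    rw [div_mul_eq_mul_div, le_div_iff₀ hiip]
    linarith only [h2]
  -- tendsto for E, A, I
  have hTE : Tendsto E atTop (nhds 0) := by
    apply tendsto_zero_of_expbound E ε BL 0 hεp
    · intro t ht; simp; exact (hnonneg t ht).2.2.1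
    · exact hEb
  have hTA : Tendsto A atTop (nhds 0) := by
    apply tendsto_zero_of_expbound A ε (BL / aa) 0 hεp
    · intro t ht; simp; exact (hnonneg t ht).2.2.2.1
    · exact hAb
  have hTI : Tendsto I atTop (nhds 0) := by
    apply tendsto_zero_of_expbound I ε (BL / ii) 0 hεp
    · intro t ht; simp; exact (hnonneg t ht).2.2.2.2.1
    · exact hIb
  -- lam is nonnegative
  have hlamnn : ∀ t, 0 ≤ t → 0 ≤ lam t := by
    intro t ht
    obtain ⟨_, _, _, hAnn, hInn, _⟩ := hnonneg t ht
    have hNpos := (hNbound t ht).1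
    rw [hlam t]
    exact div_nonneg (mul_nonneg hβ.le (add_nonneg hAnn (mul_nonneg hη.le hInn))) hNpos.le
  -- R tends to 0
  have hRside : ∀ t, 0 ≤ t → a1 * σ * A t + θ * I t - (μ + φ2 * lam t) * R t
      ≤ -μ * R t + (a1 * σ * (BL / aa) + θ * (BL / ii)) * Real.exp (-ε * t) := by
    intro t ht
    obtain ⟨_, _, _, hAnn, hInn, hRnn⟩ := hnonneg t ht
    have h1 := mul_le_mul_of_nonneg_left (hAb t ht) (mul_nonneg ha1.le hσ.le)
    have h2 := mul_le_mul_of_nonneg_left (hIb t ht) hθ.le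
    have h3 : 0 ≤ φ2 * lam t * R t :=
      mul_nonneg (mul_nonneg hφ2 (hlamnn t ht)) hRnn
    linarith only [h1, h2, h3]
  have hTR : Tendsto R atTop (nhds 0) := by
    obtain ⟨BR, hBR0, hBR⟩ := exp_upper R
      (fun t => a1 * σ * A t + θ * I t - (μ + φ2 * lam t) * R t) μ ε
      (a1 * σ * (BL / aa) + θ * (BL / ii)) hεp hεμ
      (add_nonneg (mul_nonneg (mul_nonneg ha1.le hσ.le) (div_nonneg hBL0 haap.le))
        (mul_nonneg hθ.le (div_nonneg hBL0 hiip.le)))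
      (fun t ht => hR t ht) hRside
    apply tendsto_zero_of_expbound R ε BR 0 hεp
    · intro t ht; simp; exact (hnonneg t ht).2.2.2.2.2
    · exact hBR
  -- perturbation bounds
  obtain ⟨D2, hD2⟩ : ∃ x : ℝ, x = β * (BL / aa + η * (BL / ii)) := ⟨_, rfl⟩
  have hD2nn : 0 ≤ D2 := by
    rw [hD2]
    exact mul_nonneg hβ.le (add_nonneg (div_nonneg hBL0 haap.le)
      (mul_nonneg hη.le (div_nonneg hBL0 hiip.le)))
  have hpertS : ∀ t, 0 ≤ t → 0 ≤ lam t * S t ∧ lam t * S t ≤ D2 * Real.exp (-ε * t) := by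
    intro t ht
    obtain ⟨hSnn, hVnn, hEnn, hAnn, hInn, hRnn⟩ := hnonneg t ht
    have hNpos := (hNbound t ht).1
    refine ⟨mul_nonneg (hlamnn t ht) hSnn, ?_⟩
    have hSN : S t / N t ≤ 1 := by
      rw [div_le_one hNpos, hN t]; linarith
    have heq : lam t * S t = β * (A t + η * I t) * (S t / N t) := by
      rw [hlam t]; ring
    have hAI : 0 ≤ A t + η * I t := add_nonneg hAnn (mul_nonneg hη.le hInn)
    calc lam t * S t = β * (A t + η * I t) * (S t / N t) := heq
      _ ≤ β * (A t + η * I t) * 1 :=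
        mul_le_mul_of_nonneg_left hSN (mul_nonneg hβ.le hAI)
      _ = β * (A t + η * I t) := by ring
      _ ≤ D2 * Real.exp (-ε * t) := by
        rw [hD2]
        have h1 := mul_le_mul_of_nonneg_left (hAb t ht) hβ.le
        have h2 := mul_le_mul_of_nonneg_left (hIb t ht) (mul_nonneg hβ.le hη.le)
        linarith only [h1, h2]
  have hpertV : ∀ t, 0 ≤ t →
      0 ≤ φ1 * lam t * V t ∧ φ1 * lam t * V t ≤ D2 * Real.exp (-ε * t) := by
    intro t ht
    obtain ⟨hSnn, hVnn, hEnn, hAnn, hInn, hRnn⟩ := hnonneg t ht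
    have hNpos := (hNbound t ht).1
    refine ⟨mul_nonneg (mul_nonneg hφ1 (hlamnn t ht)) hVnn, ?_⟩
    have hVN : V t / N t ≤ 1 := by
      rw [div_le_one hNpos, hN t]; linarith
    have heq : φ1 * lam t * V t = φ1 * (β * (A t + η * I t)) * (V t / N t) := by
      rw [hlam t]; ring
    have hAI : 0 ≤ A t + η * I t := add_nonneg hAnn (mul_nonneg hη.le hInn)
    have hβAI : 0 ≤ β * (A t + η * I t) := mul_nonneg hβ.le hAI
    calc φ1 * lam t * V t = φ1 * (β * (A t + η * I t)) * (V t / N t) := heq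
      _ ≤ φ1 * (β * (A t + η * I t)) * 1 :=
        mul_le_mul_of_nonneg_left hVN (mul_nonneg hφ1 hβAI)
      _ ≤ 1 * (β * (A t + η * I t)) * 1 := by
        have h5 := mul_le_mul_of_nonneg_right hφ1' hβAI
        linarith only [h5]
      _ = β * (A t + η * I t) := by ring
      _ ≤ D2 * Real.exp (-ε * t) := by
        rw [hD2]
        have h1 := mul_le_mul_of_nonneg_left (hAb t ht) hβ.le
        have h2 := mul_le_mul_of_nonneg_left (hIb t ht) (mul_nonneg hβ.le hη.le)
        linarith only [h1, h2]
  -- w = S + V - (S0 + V0)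
  obtain ⟨w, hwdef⟩ : ∃ f : ℝ → ℝ, f = fun t => S t + V t - (S0 + V0) := ⟨_, rfl⟩
  have hwt : ∀ t, w t = S t + V t - (S0 + V0) := by intro t; rw [hwdef]
  have hwder : ∀ t, 0 ≤ t →
      HasDerivAt w (-μ * w t - (lam t * S t + φ1 * lam t * V t)) t := by
    intro t ht
    have h := ((hS t ht).add (hV t ht)).sub_const (S0 + V0)
    have hwt' := hwt t
    rw [hwdef] at hwt' ⊢
    refine h.congr_deriv ?_
    linear_combination -(-Λ * hr12 - hΛeq + S t * hk1 + V t * hk2)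
  have hw1 : ∀ t, 0 ≤ t → -μ * w t - (lam t * S t + φ1 * lam t * V t)
      ≤ -μ * w t + 2 * D2 * Real.exp (-ε * t) := by
    intro t ht
    have h1 := (hpertS t ht).1
    have h2 := (hpertV t ht).1
    have h3 : 0 ≤ 2 * D2 * Real.exp (-ε * t) :=
      mul_nonneg (by linarith only [hD2nn]) (Real.exp_pos _).le
    linarith only [h1, h2, h3]
  obtain ⟨B1, hB10, hB1⟩ := exp_upper w
    (fun t => -μ * w t - (lam t * S t + φ1 * lam t * V t)) μ ε (2 * D2)
    hεp hεμ (by linarith only [hD2nn]) hwder hw1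
  have hwnder : ∀ t, 0 ≤ t →
      HasDerivAt (fun u => -w u) (μ * w t + (lam t * S t + φ1 * lam t * V t)) t := by
    intro t ht
    have h := (hwder t ht).fun_neg
    refine h.congr_deriv ?_; ring
  have hw2 : ∀ t, 0 ≤ t → μ * w t + (lam t * S t + φ1 * lam t * V t)
      ≤ -μ * -w t + 2 * D2 * Real.exp (-ε * t) := by
    intro t ht
    have h1 := (hpertS t ht).2
    have h2 := (hpertV t ht).2
    linarith only [h1, h2]
  obtain ⟨B2, hB20, hB2⟩ := exp_upper (fun u => -w u)
    (fun t => μ * w t + (lam t * S t + φ1 * lam t * V t)) μ ε (2 * D2)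
    hεp hεμ (by linarith only [hD2nn]) hwnder hw2
  have hTw : Tendsto w atTop (nhds 0) := by
    apply tendsto_zero_of_expbound w ε B1 B2 hεp
    · intro t ht
      have := hB2 t ht
      linarith only [this]
    · exact hB1
  -- z = c1 (S - S0) - c2 (V - V0)
  obtain ⟨z, hzdef⟩ : ∃ f : ℝ → ℝ, f = fun t => c1 * (S t - S0) - c2 * (V t - V0) := ⟨_, rfl⟩
  have hzt : ∀ t, z t = c1 * (S t - S0) - c2 * (V t - V0) := by intro t; rw [hzdef]
  have hzder : ∀ t, 0 ≤ t →
      HasDerivAt z (-(c1 + c2 + μ) * z t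
        + (c2 * (φ1 * lam t * V t) - c1 * (lam t * S t))) t := by
    intro t ht
    have h := (((hS t ht).sub_const S0).const_mul c1).sub
      (((hV t ht).sub_const V0).const_mul c2)
    have hzt' := hzt t
    rw [hzdef] at hzt' ⊢
    refine h.congr_deriv ?_
    linear_combination -(c1 * hDFE1 - c2 * hDFE2 + c1 * (S t - S0) * hk1 - c2 * (V t - V0) * hk2)
  have hεK : ε < c1 + c2 + μ := by linarith
  have hz1 : ∀ t, 0 ≤ t → -(c1 + c2 + μ) * z t + (c2 * (φ1 * lam t * V t) - c1 * (lam t * S t))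
      ≤ -(c1 + c2 + μ) * z t + (c1 + c2) * D2 * Real.exp (-ε * t) := by
    intro t ht
    have h1 := (hpertV t ht).2
    have h2 := (hpertS t ht).1
    have e1 := mul_le_mul_of_nonneg_left h1 hc2.le
    have e2 := mul_nonneg hc1.le h2
    have e3 : 0 ≤ c1 * (D2 * Real.exp (-ε * t)) :=
      mul_nonneg hc1.le (mul_nonneg hD2nn (Real.exp_pos _).le)
    linarith only [e1, e2, e3]
  obtain ⟨C1, hC10, hC1⟩ := exp_upper z
    (fun t => -(c1 + c2 + μ) * z t + (c2 * (φ1 * lam t * V t) - c1 * (lam t * S t)))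
    (c1 + c2 + μ) ε ((c1 + c2) * D2) hεp hεK
    (mul_nonneg (by linarith only [hc1, hc2]) hD2nn) hzder hz1
  have hznder : ∀ t, 0 ≤ t →
      HasDerivAt (fun u => -z u) ((c1 + c2 + μ) * z t
        - (c2 * (φ1 * lam t * V t) - c1 * (lam t * S t))) t := by
    intro t ht
    have h := (hzder t ht).fun_neg
    refine h.congr_deriv ?_; ring
  have hz2 : ∀ t, 0 ≤ t → (c1 + c2 + μ) * z t - (c2 * (φ1 * lam t * V t) - c1 * (lam t * S t))
      ≤ -(c1 + c2 + μ) * -z t + (c1 + c2) * D2 * Real.exp (-ε * t) := by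
    intro t ht
    have h1 := (hpertS t ht).2
    have h2 := (hpertV t ht).1
    have e1 := mul_le_mul_of_nonneg_left h1 hc1.le
    have e2 := mul_nonneg hc2.le h2
    have e3 : 0 ≤ c2 * (D2 * Real.exp (-ε * t)) :=
      mul_nonneg hc2.le (mul_nonneg hD2nn (Real.exp_pos _).le)
    linarith only [e1, e2, e3]
  obtain ⟨C2, hC20, hC2⟩ := exp_upper (fun u => -z u)
    (fun t => (c1 + c2 + μ) * z t - (c2 * (φ1 * lam t * V t) - c1 * (lam t * S t)))
    (c1 + c2 + μ) ε ((c1 + c2) * D2) hεp hεK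
    (mul_nonneg (by linarith only [hc1, hc2]) hD2nn) hznder hz2
  have hTz : Tendsto z atTop (nhds 0) := by
    apply tendsto_zero_of_expbound z ε C1 C2 hεp
    · intro t ht
      have := hC2 t ht
      linarith only [this]
    · exact hC1
  -- recover S and V
  have hc12 : (0:ℝ) < c1 + c2 := by linarith
  have hSid : S = fun t => S0 + (c2 * w t + z t) / (c1 + c2) := by
    funext t
    rw [hwt t, hzt t]
    field_simp
    ring
  have hVid : V = fun t => V0 + (c1 * w t - z t) / (c1 + c2) := by
    funext t
    rw [hwt t, hzt t]
    field_simp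
    ring
  have hTS : Tendsto S atTop (nhds S0) := by
    rw [hSid]
    have h : Tendsto (fun t => S0 + (c2 * w t + z t) / (c1 + c2)) atTop
        (nhds (S0 + (c2 * 0 + 0) / (c1 + c2))) :=
      tendsto_const_nhds.add (((hTw.const_mul c2).add hTz).div_const _)
    simpa using h
  have hTV : Tendsto V atTop (nhds V0) := by
    rw [hVid]
    have h : Tendsto (fun t => V0 + (c1 * w t - z t) / (c1 + c2)) atTop
        (nhds (V0 + (c1 * 0 - 0) / (c1 + c2))) :=
      tendsto_const_nhds.add (((hTw.const_mul c1).sub hTz).div_const _)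
    simpa using h
  exact ⟨hTS, hTV, hTE, hTA, hTI, hTR⟩
end

section
/- Factorization of the characteristic polynomial of the Jacobian at the DFE: the characteristic polynomial of the 6×6 matrix J(E0) factors (as a polynomial in ν with real coefficients) as det(ν·I₆ − J(E0)) = (ν+μ)·(ν² + (k1+k2)·ν + μ·(μ+c1+c2))·g(ν), where g is the monic cubic g(ν) = ν³ + ϖ2·ν² + ϖ1·ν + ϖ0 with ϖ2 = k3+k4+k5, ϖ0 = (1−R_c)·k3·k4·k5, and ϖ1 = [ (1−R_c)·(p+η·q)·k3·k4·k5 + (k4+k3)·(k5+a2·η·σ)·k5·p + ((k5+k3)·k4·q + k3·a2·p·σ)·k4·η ] / (a2·η·p·σ + k4·η·q + k5·p). -/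
open Matrix Polynomial

set_option maxHeartbeats 1000000 in
/-- Factorization of the characteristic polynomial of the Jacobian of the COVID-19
model at the disease-free equilibrium:
`det(ν I₆ - J(E0)) = (ν + μ)(ν² + (k1+k2)ν + μ(μ+c1+c2)) g(ν)`
with `g` the monic cubic with coefficients `ϖ2, ϖ1, ϖ0`. -/
theorem charpoly_factorization_at_dfe
    (Λ μ β η γ σ θ δ c1 c2 r1 r2 p q a1 a2 φ1 φ2 : ℝ)
    (hΛ : 0 < Λ) (hμ : 0 < μ) (hβ : 0 < β) (hη : 0 < η) (hγ : 0 < γ)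
    (hσ : 0 < σ) (hθ : 0 < θ) (hδ : 0 < δ) (hc1 : 0 < c1) (hc2 : 0 < c2)
    (hr1 : 0 < r1) (hr1' : r1 < 1) (hr2 : 0 < r2) (hr2' : r2 < 1)
    (hp : 0 < p) (hp' : p < 1) (hq : 0 < q) (hq' : q < 1)
    (ha1 : 0 < a1) (ha1' : a1 < 1) (ha2 : 0 < a2) (ha2' : a2 < 1)
    (hr12 : r1 + r2 = 1) (hpq : p + q = 1) (ha12 : a1 + a2 = 1)
    (hφ1 : 0 ≤ φ1) (hφ1' : φ1 ≤ 1) (hφ2 : 0 ≤ φ2) (hφ2' : φ2 ≤ 1)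
    (k1 k2 k3 k4 k5 k6 S0 V0 N0 N1 Rc : ℝ)
    (hk1 : k1 = c1 + μ) (hk2 : k2 = c2 + μ) (hk3 : k3 = μ + γ)
    (hk4 : k4 = μ + σ) (hk5 : k5 = μ + δ + θ) (hk6 : k6 = k1 * k2 - c1 * c2)
    (hS0 : S0 = (c2 * r2 + r1 * k2) * Λ / k6)
    (hV0 : V0 = (k1 * r2 + c1 * r1) * Λ / k6)
    (hN0 : N0 = S0 + V0) (hN1 : N1 = S0 + φ1 * V0)
    (hRc : Rc = N1 * β * η * γ * (a2 * p * σ + k4 * q) / (N0 * k3 * k4 * k5)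
        + N1 * β * p * γ / (N0 * k3 * k4))
    (J : Matrix (Fin 6) (Fin 6) ℝ)
    (hJ : J = !![-k1, c2, 0, -(β * S0 / N0), -(β * η * S0 / N0), 0;
                 c1, -k2, 0, -(β * φ1 * V0 / N0), -(β * η * φ1 * V0 / N0), 0;
                 0, 0, -k3, β * N1 / N0, β * η * N1 / N0, 0;
                 0, 0, p * γ, -k4, 0, 0;
                 0, 0, q * γ, a2 * σ, -k5, 0;
                 0, 0, 0, a1 * σ, θ, -μ])
    (w2 w1 w0 : ℝ)
    (hw2 : w2 = k3 + k4 + k5)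
    (hw1 : w1 = ((1 - Rc) * (p + η * q) * k3 * k4 * k5
        + (k4 + k3) * (k5 + a2 * η * σ) * k5 * p
        + ((k5 + k3) * k4 * q + k3 * a2 * p * σ) * k4 * η)
        / (a2 * η * p * σ + k4 * η * q + k5 * p))
    (hw0 : w0 = (1 - Rc) * k3 * k4 * k5) :
    J.charpoly =
      (X + C μ) * (X ^ 2 + C (k1 + k2) * X + C (μ * (μ + c1 + c2))) *
        (X ^ 3 + C w2 * X ^ 2 + C w1 * X + C w0) := by
  -- positivity facts
  have hk6pos : 0 < k6 := by
    have e : k6 = c1 * μ + μ * c2 + μ * μ := by rw [hk6, hk1, hk2]; ring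
    rw [e]; positivity
  have hS0pos : 0 < S0 := by
    rw [hS0]
    apply div_pos _ hk6pos
    apply mul_pos _ hΛ
    have hk2p : 0 < k2 := by rw [hk2]; linarith
    positivity
  have hV0pos : 0 < V0 := by
    rw [hV0]
    apply div_pos _ hk6pos
    apply mul_pos _ hΛ
    have hk1p : 0 < k1 := by rw [hk1]; linarith
    positivity
  have hN0pos : 0 < N0 := by rw [hN0]; linarith
  have hN0 : N0 ≠ 0 := ne_of_gt hN0pos
  have hk3' : k3 ≠ 0 := by rw [hk3]; positivity
  have hk4' : k4 ≠ 0 := by rw [hk4]; positivity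
  have hk5' : k5 ≠ 0 := by rw [hk5]; positivity
  have hD : a2 * η * p * σ + k4 * η * q + k5 * p ≠ 0 := by
    have : 0 < k4 := by rw [hk4]; positivity
    have : 0 < k5 := by rw [hk5]; positivity
    positivity
  -- the effective transmission coefficient
  set u : ℝ := β * N1 / N0 with hu
  have hw0' : w0 = k3*k4*k5 - u*γ*(p*k5 + η*(a2*p*σ + q*k4)) := by
    rw [hw0, hRc, hu]
    field_simp
    ring
  have hw1' : w1 = k3*k4 + k3*k5 + k4*k5 - u*γ*(p + η*q) := by
    rw [hw1, hRc, hu]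
    rw [div_eq_iff hD]
    field_simp
    ring
  have hμc : μ * (μ + c1 + c2) = k1*k2 - c1*c2 := by rw [hk1, hk2]; ring
  -- `set` has already rewritten the (3,4) entry of `hJ` to `u`;
  -- rewrite the (3,5) entry as `η * u`
  rw [show β * η * N1 / N0 = η * u from by rw [hu]; ring] at hJ
  rw [hw2, hw1', hw0', hμc]
  -- block-triangular factorization of the characteristic polynomial
  have h6 : J = ((fromBlocks
      !![-k1, c2; c1, -k2]
      !![0, -(β * S0 / N0), -(β * η * S0 / N0), 0;
         0, -(β * φ1 * V0 / N0), -(β * η * φ1 * V0 / N0), 0]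
      0
      !![-k3, u, η*u, 0; p*γ, -k4, 0, 0; q*γ, a2*σ, -k5, 0; 0, a1*σ, θ, -μ]).submatrix
        finSumFinEquiv.symm finSumFinEquiv.symm) := by
    subst hJ
    ext i j
    fin_cases i <;> fin_cases j <;> rfl
  rw [h6]
  rw [show (Matrix.submatrix _ finSumFinEquiv.symm finSumFinEquiv.symm) =
      (Matrix.reindex finSumFinEquiv finSumFinEquiv _) from rfl]
  rw [Matrix.charpoly_reindex, Matrix.charpoly_fromBlocks_zero₂₁]
  have h4 : (!![-k3, u, η*u, 0; p*γ, -k4, 0, 0; q*γ, a2*σ, -k5, 0; 0, a1*σ, θ, -μ] :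
      Matrix (Fin 4) (Fin 4) ℝ) = ((fromBlocks
      !![-k3, u, η*u; p*γ, -k4, 0; q*γ, a2*σ, -k5]
      0
      !![0, a1*σ, θ]
      !![-μ]).submatrix finSumFinEquiv.symm finSumFinEquiv.symm) := by
    ext i j
    fin_cases i <;> fin_cases j <;> rfl
  rw [h4]
  rw [show (Matrix.submatrix _ finSumFinEquiv.symm finSumFinEquiv.symm) =
      (Matrix.reindex finSumFinEquiv finSumFinEquiv _) from rfl]
  rw [Matrix.charpoly_reindex, Matrix.charpoly_fromBlocks_zero₁₂]
  have hc2 : (!![-k1, c2; c1, -k2] : Matrix (Fin 2) (Fin 2) ℝ).charpoly =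
      X ^ 2 + C (k1 + k2) * X + C (k1*k2 - c1*c2) := by
    simp [Matrix.charpoly, Matrix.det_fin_two, charmatrix_apply, Matrix.one_apply,
      _root_.map_mul, _root_.map_add, map_sub]
    ring
  have hc3 : (!![-k3, u, η*u; p*γ, -k4, 0; q*γ, a2*σ, -k5] :
      Matrix (Fin 3) (Fin 3) ℝ).charpoly =
      X ^ 3 + C (k3+k4+k5) * X ^ 2
          + C (k3*k4+k3*k5+k4*k5 - u*γ*(p+η*q)) * X
          + C (k3*k4*k5 - u*γ*(p*k5 + η*(a2*p*σ + q*k4))) := by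
    simp [Matrix.charpoly, Matrix.det_fin_three, charmatrix_apply, Matrix.one_apply,
      _root_.map_mul, _root_.map_add, map_sub]
    ring
  have hc1' : (!![-μ] : Matrix (Fin 1) (Fin 1) ℝ).charpoly = X + C μ := by
    simp [Matrix.charpoly, Matrix.det_fin_one, charmatrix_apply]
  rw [hc2, hc3, hc1']
  ring
end

section
/- Local asymptotic stability of the DFE (ODE model): if R_c < 1, then every complex eigenvalue of the 6×6 Jacobian matrix J(E0) has strictly negative real part. -/
open Matrix

set_option maxHeartbeats 2000000
set_option maxRecDepth 20000

@[simp]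
lemma cons_val_five' {α : Type*} {m : ℕ} (x : α) (u : Fin (m+5) → α) :
    Matrix.vecCons x u 5
      = Matrix.vecHead (Matrix.vecTail (Matrix.vecTail (Matrix.vecTail (Matrix.vecTail u)))) :=
  rfl

lemma quad_aux (A B : ℝ) (hA : 0 < A) (hB : 0 < B) (z : ℂ)
    (h : z ^ 2 + (A : ℂ) * z + (B : ℂ) = 0) : z.re < 0 := by
  by_contra hre
  push_neg at hre
  rw [Complex.ext_iff] at h
  obtain ⟨h1, h2⟩ := h
  simp [pow_two, Complex.mul_re, Complex.mul_im] at h1 h2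
  set u := z.re
  set v := z.im
  have h2' : v * (2 * u + A) = 0 := by linear_combination h2
  have hv : v = 0 := by
    rcases mul_eq_zero.mp h2' with hv | hv
    · exact hv
    · nlinarith
  rw [hv] at h1
  nlinarith

lemma cubic_aux (a b c : ℝ) (ha : 0 < a) (hb : 0 < b) (hc : 0 < c) (habc : c < a * b)
    (z : ℂ) (h : z ^ 3 + (a : ℂ) * z ^ 2 + (b : ℂ) * z + (c : ℂ) = 0) : z.re < 0 := by
  by_contra hre
  push_neg at hre
  rw [Complex.ext_iff] at h
  obtain ⟨h1, h2⟩ := h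
  simp [pow_succ, pow_two, Complex.mul_re, Complex.mul_im] at h1 h2
  set u := z.re
  set v := z.im
  have h2' : v * (3 * u ^ 2 - v ^ 2 + 2 * a * u + b) = 0 := by linear_combination h2
  rcases mul_eq_zero.mp h2' with hv | hv
  · rw [hv] at h1
    nlinarith
  · have hv2 : v ^ 2 = 3 * u ^ 2 + 2 * a * u + b := by linarith
    have key : c - a * b = 8*u^3 + 8*a*u^2 + 2*a^2*u + 2*b*u := by
      linear_combination h1 + (3*u + a) * hv2
    nlinarith [mul_nonneg (mul_nonneg hre hre) hre, mul_nonneg ha.le (mul_nonneg hre hre),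
      mul_nonneg (mul_nonneg ha.le ha.le) hre, mul_nonneg hb.le hre]

lemma rh_facts (k3 k4 k5 x y w : ℝ) (hk3 : 0 < k3) (hk4 : 0 < k4) (hk5 : 0 < k5)
    (hx : 0 < x) (hy : 0 < y) (hw : 0 < w)
    (hkey : w + k4 * y + k5 * x < k3 * k4 * k5) :
    0 < k3 * k4 + k3 * k5 + k4 * k5 - x - y ∧
    0 < k3 * k4 * k5 - k5 * x - k4 * y - w ∧
    k3 * k4 * k5 - k5 * x - k4 * y - w
      < (k3 + k4 + k5) * (k3 * k4 + k3 * k5 + k4 * k5 - x - y) := by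
  have hxlt : x < k3 * k4 := by nlinarith
  have hylt : y < k3 * k5 := by nlinarith
  refine ⟨by nlinarith [mul_pos hk4 hk5], by nlinarith, ?_⟩
  nlinarith [mul_pos (mul_pos hk3 hk4) hk5, mul_pos (mul_pos hk4 hk4) hk5,
    mul_pos (mul_pos hk4 hk5) hk5,
    mul_pos (show (0:ℝ) < k3 + k4 by linarith) (show (0:ℝ) < k3 * k4 - x by linarith),
    mul_pos (show (0:ℝ) < k3 + k5 by linarith) (show (0:ℝ) < k3 * k5 - y by linarith)]

/-- Local asymptotic stability of the DFE of the COVID-19 ODE model: if `R_c < 1`,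
then every complex eigenvalue of the Jacobian `J(E0)` has strictly negative real
part. -/
theorem dfe_locally_asymptotically_stable
    (Λ μ β η γ σ θ δ c1 c2 r1 r2 p q a1 a2 φ1 φ2 : ℝ)
    (hΛ : 0 < Λ) (hμ : 0 < μ) (hβ : 0 < β) (hη : 0 < η) (hγ : 0 < γ)
    (hσ : 0 < σ) (hθ : 0 < θ) (hδ : 0 < δ) (hc1 : 0 < c1) (hc2 : 0 < c2)
    (hr1 : 0 < r1) (hr1' : r1 < 1) (hr2 : 0 < r2) (hr2' : r2 < 1)
    (hp : 0 < p) (hp' : p < 1) (hq : 0 < q) (hq' : q < 1)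
    (ha1 : 0 < a1) (ha1' : a1 < 1) (ha2 : 0 < a2) (ha2' : a2 < 1)
    (hr12 : r1 + r2 = 1) (hpq : p + q = 1) (ha12 : a1 + a2 = 1)
    (hφ1 : 0 ≤ φ1) (hφ1' : φ1 ≤ 1) (hφ2 : 0 ≤ φ2) (hφ2' : φ2 ≤ 1)
    (k1 k2 k3 k4 k5 k6 S0 V0 N0 N1 Rc : ℝ)
    (hk1 : k1 = c1 + μ) (hk2 : k2 = c2 + μ) (hk3 : k3 = μ + γ)
    (hk4 : k4 = μ + σ) (hk5 : k5 = μ + δ + θ) (hk6 : k6 = k1 * k2 - c1 * c2)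
    (hS0 : S0 = (c2 * r2 + r1 * k2) * Λ / k6)
    (hV0 : V0 = (k1 * r2 + c1 * r1) * Λ / k6)
    (hN0 : N0 = S0 + V0) (hN1 : N1 = S0 + φ1 * V0)
    (hRc : Rc = N1 * β * η * γ * (a2 * p * σ + k4 * q) / (N0 * k3 * k4 * k5)
        + N1 * β * p * γ / (N0 * k3 * k4))
    (J : Matrix (Fin 6) (Fin 6) ℝ)
    (hJ : J = !![-k1, c2, 0, -(β * S0 / N0), -(β * η * S0 / N0), 0;
                 c1, -k2, 0, -(β * φ1 * V0 / N0), -(β * η * φ1 * V0 / N0), 0;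
                 0, 0, -k3, β * N1 / N0, β * η * N1 / N0, 0;
                 0, 0, p * γ, -k4, 0, 0;
                 0, 0, q * γ, a2 * σ, -k5, 0;
                 0, 0, 0, a1 * σ, θ, -μ])
    (hRclt : Rc < 1) :
    ∀ z ∈ spectrum ℂ (J.map (Complex.ofReal)), z.re < 0 := by
  -- basic positivity
  have hk1p : 0 < k1 := by rw [hk1]; linarith
  have hk2p : 0 < k2 := by rw [hk2]; linarith
  have hk3p : 0 < k3 := by rw [hk3]; linarith
  have hk4p : 0 < k4 := by rw [hk4]; linarith
  have hk5p : 0 < k5 := by rw [hk5]; linarith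
  have hk6eq : k6 = μ * (c1 + c2 + μ) := by rw [hk6, hk1, hk2]; ring
  have hk6p : 0 < k6 := by
    rw [hk6eq]; exact mul_pos hμ (by linarith)
  have hS0p : 0 < S0 := by
    rw [hS0]
    exact div_pos (mul_pos (by positivity) hΛ) hk6p
  have hV0p : 0 < V0 := by
    rw [hV0]
    exact div_pos (mul_pos (by positivity) hΛ) hk6p
  have hN0p : 0 < N0 := by rw [hN0]; linarith
  have hN1p : 0 < N1 := by
    have := mul_nonneg hφ1 hV0p.le
    rw [hN1]; linarith
  set X : ℝ := β * N1 / N0 with hX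
  set Y : ℝ := β * η * N1 / N0 with hY
  have hXp : 0 < X := div_pos (mul_pos hβ hN1p) hN0p
  have hYp : 0 < Y := div_pos (mul_pos (mul_pos hβ hη) hN1p) hN0p
  have hxp : 0 < X * (p * γ) := mul_pos hXp (mul_pos hp hγ)
  have hyp : 0 < Y * (q * γ) := mul_pos hYp (mul_pos hq hγ)
  have hwp : 0 < Y * (p * γ * (a2 * σ)) :=
    mul_pos hYp (mul_pos (mul_pos hp hγ) (mul_pos ha2 hσ))
  -- key inequality from Rc < 1
  have hkkk : 0 < k3 * k4 * k5 := mul_pos (mul_pos hk3p hk4p) hk5p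
  have hRc' : Rc * (k3 * k4 * k5)
      = Y * (p * γ * (a2 * σ)) + k4 * (Y * (q * γ)) + k5 * (X * (p * γ)) := by
    rw [hRc, hX, hY]
    field_simp
  have hkey : Y * (p * γ * (a2 * σ)) + k4 * (Y * (q * γ)) + k5 * (X * (p * γ))
      < k3 * k4 * k5 := by
    have h := mul_lt_mul_of_pos_right hRclt hkkk
    rw [one_mul] at h
    linarith [hRc']
  obtain ⟨hB3p', hC3p', hRH'⟩ := rh_facts k3 k4 k5 (X * (p * γ)) (Y * (q * γ))
    (Y * (p * γ * (a2 * σ))) hk3p hk4p hk5p hxp hyp hwp hkey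
  set A3 : ℝ := k3 + k4 + k5 with hA3
  set B3 : ℝ := k3 * k4 + k3 * k5 + k4 * k5 - X * (p * γ) - Y * (q * γ) with hB3
  set C3 : ℝ := k3 * k4 * k5 - k5 * (X * (p * γ)) - k4 * (Y * (q * γ))
      - Y * (p * γ * (a2 * σ)) with hC3
  have hA3p : 0 < A3 := by rw [hA3]; linarith
  have hB3p : 0 < B3 := hB3p'
  have hC3p : 0 < C3 := hC3p'
  have hRH : C3 < A3 * B3 := hRH'
  intro z hz
  have hdet0 : (z • (1 : Matrix (Fin 6) (Fin 6) ℂ) - J.map Complex.ofReal).det = 0 := by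
    have h := spectrum.mem_iff.mp hz
    rw [Matrix.isUnit_iff_isUnit_det, isUnit_iff_ne_zero, not_not] at h
    convert h using 2
    simp [Algebra.algebraMap_eq_smul_one]
  have hMN : z • (1 : Matrix (Fin 6) (Fin 6) ℂ) - J.map Complex.ofReal =
      !![z + (k1:ℂ), -(c2:ℂ), 0, ((β * S0 / N0 : ℝ) : ℂ), ((β * η * S0 / N0 : ℝ) : ℂ), 0;
         -(c1:ℂ), z + (k2:ℂ), 0, ((β * φ1 * V0 / N0 : ℝ) : ℂ), ((β * η * φ1 * V0 / N0 : ℝ) : ℂ), 0;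
         0, 0, z + (k3:ℂ), -((X:ℝ):ℂ), -((Y:ℝ):ℂ), 0;
         0, 0, -((p * γ : ℝ):ℂ), z + (k4:ℂ), 0, 0;
         0, 0, -((q * γ : ℝ):ℂ), -((a2 * σ : ℝ):ℂ), z + (k5:ℂ), 0;
         0, 0, 0, -((a1 * σ : ℝ):ℂ), -((θ:ℝ):ℂ), z + (μ:ℂ)] := by
    subst hJ
    ext i j
    fin_cases i <;> fin_cases j <;>
      simp [Matrix.one_apply, hX, hY, cons_val_five', Matrix.vecHead, Matrix.vecTail] <;> push_cast <;> ring
  rw [hMN] at hdet0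
  have hdet : (!![z + (k1:ℂ), -(c2:ℂ), 0, ((β * S0 / N0 : ℝ) : ℂ), ((β * η * S0 / N0 : ℝ) : ℂ), 0;
         -(c1:ℂ), z + (k2:ℂ), 0, ((β * φ1 * V0 / N0 : ℝ) : ℂ), ((β * η * φ1 * V0 / N0 : ℝ) : ℂ), 0;
         0, 0, z + (k3:ℂ), -((X:ℝ):ℂ), -((Y:ℝ):ℂ), 0;
         0, 0, -((p * γ : ℝ):ℂ), z + (k4:ℂ), 0, 0;
         0, 0, -((q * γ : ℝ):ℂ), -((a2 * σ : ℝ):ℂ), z + (k5:ℂ), 0;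
         0, 0, 0, -((a1 * σ : ℝ):ℂ), -((θ:ℝ):ℂ), z + (μ:ℂ)] : Matrix (Fin 6) (Fin 6) ℂ).det
      = (z + (μ:ℂ)) * ((z + (k1:ℂ)) * (z + (k2:ℂ)) - (c1:ℂ) * (c2:ℂ))
        * (z ^ 3 + ((A3:ℝ):ℂ) * z ^ 2 + ((B3:ℝ):ℂ) * z + ((C3:ℝ):ℂ)) := by
    rw [hA3, hB3, hC3]
    simp [Matrix.det_succ_row_zero, Fin.sum_univ_succ, Fin.succAbove]
    push_cast
    ring
  rw [hdet] at hdet0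
  rcases mul_eq_zero.mp hdet0 with h12 | h3
  · rcases mul_eq_zero.mp h12 with hmu | hquad
    · have hz' : z = -(μ:ℂ) := eq_neg_of_add_eq_zero_left hmu
      rw [hz']
      simpa using hμ
    · refine quad_aux (k1 + k2) (k1 * k2 - c1 * c2) (by linarith) (by rw [← hk6]; exact hk6p) z ?_
      push_cast
      linear_combination hquad
  · exact cubic_aux A3 B3 C3 hA3p hB3p hC3p hRH z h3
end

section
/- Local asymptotic stability of the DFE for the linearized reaction-diffusion model: let κs, κv, κe, κa, κi, κr be positive reals and Υ = diag(κs, κv, κe, κa, κi, κr). If R_c < 1, then for every ψ ≥ 0, every complex eigenvalue of the 6×6 matrix J(E0) − ψ·Υ has strictly negative real part. -/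
set_option maxRecDepth 8000
set_option maxHeartbeats 2000000

open Matrix

section ConsVal
variable {α : Type*}
@[simp] lemma consval6_1 (x : α) (u : Fin 5 → α) : Matrix.vecCons x u (1:Fin 6) = u 0 := rfl
@[simp] lemma consval6_2 (x : α) (u : Fin 5 → α) : Matrix.vecCons x u (2:Fin 6) = u 1 := rfl
@[simp] lemma consval6_3 (x : α) (u : Fin 5 → α) : Matrix.vecCons x u (3:Fin 6) = u 2 := rfl
@[simp] lemma consval6_4 (x : α) (u : Fin 5 → α) : Matrix.vecCons x u (4:Fin 6) = u 3 := rfl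
@[simp] lemma consval6_5 (x : α) (u : Fin 5 → α) : Matrix.vecCons x u (5:Fin 6) = u 4 := rfl
@[simp] lemma consval5_1 (x : α) (u : Fin 4 → α) : Matrix.vecCons x u (1:Fin 5) = u 0 := rfl
@[simp] lemma consval5_2 (x : α) (u : Fin 4 → α) : Matrix.vecCons x u (2:Fin 5) = u 1 := rfl
@[simp] lemma consval5_3 (x : α) (u : Fin 4 → α) : Matrix.vecCons x u (3:Fin 5) = u 2 := rfl
@[simp] lemma consval5_4 (x : α) (u : Fin 4 → α) : Matrix.vecCons x u (4:Fin 5) = u 3 := rfl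
@[simp] lemma consval4_1 (x : α) (u : Fin 3 → α) : Matrix.vecCons x u (1:Fin 4) = u 0 := rfl
@[simp] lemma consval4_2 (x : α) (u : Fin 3 → α) : Matrix.vecCons x u (2:Fin 4) = u 1 := rfl
@[simp] lemma consval4_3 (x : α) (u : Fin 3 → α) : Matrix.vecCons x u (3:Fin 4) = u 2 := rfl
@[simp] lemma consval3_1 (x : α) (u : Fin 2 → α) : Matrix.vecCons x u (1:Fin 3) = u 0 := rfl
@[simp] lemma consval3_2 (x : α) (u : Fin 2 → α) : Matrix.vecCons x u (2:Fin 3) = u 1 := rfl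
@[simp] lemma consval2_1 (x : α) (u : Fin 1 → α) : Matrix.vecCons x u (1:Fin 2) = u 0 := rfl
end ConsVal

lemma quad_root_re_neg' (T D : ℝ) (hT : 0 < T) (hD : 0 < D) (z : ℂ)
    (h : z^2 + (T:ℂ)*z + (D:ℂ) = 0) : z.re < 0 := by
  by_contra hx
  push_neg at hx
  have hre := congrArg Complex.re h
  have him := congrArg Complex.im h
  simp [Complex.add_re, Complex.add_im, Complex.mul_re, Complex.mul_im, pow_two] at hre him
  rcases eq_or_ne z.im 0 with hy | hy
  · rw [hy] at hre; nlinarith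
  · have h2 : 2*z.re + T = 0 := by
      have : z.im * (2*z.re + T) = 0 := by nlinarith [him]
      rcases mul_eq_zero.mp this with h|h
      · exact absurd h hy
      · exact h
    nlinarith

lemma cubic_root_re_neg' (A B C : ℝ) (hA : 0 < A) (hB : 0 < B) (hC : 0 < C)
    (hABC : C < A*B) (z : ℂ)
    (h : z^3 + (A:ℂ)*z^2 + (B:ℂ)*z + (C:ℂ) = 0) : z.re < 0 := by
  by_contra hx
  push_neg at hx
  have hre := congrArg Complex.re h
  have him := congrArg Complex.im h
  simp [Complex.add_re, Complex.add_im, Complex.mul_re, Complex.mul_im, pow_succ, pow_zero] at hre him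
  rcases eq_or_ne z.im 0 with hy | hy
  · rw [hy] at hre; nlinarith
  · have h2 : 3*z.re^2 - z.im^2 + 2*A*z.re + B = 0 := by
      have : z.im * (3*z.re^2 - z.im^2 + 2*A*z.re + B) = 0 := by nlinarith [him]
      rcases mul_eq_zero.mp this with h|h
      · exact absurd h hy
      · exact h
    have key : -8*z.re^3 - 8*A*z.re^2 - 2*(A^2+B)*z.re + (C - A*B) = 0 := by
      linear_combination hre - (3*z.re + A)*h2
    nlinarith [mul_nonneg (mul_nonneg hx hx) hx, mul_nonneg hx hx, hx]

/-- Routh–Hurwitz conditions for the 3×3 infected block. -/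
lemma RH_coeffs' (k3 k4 k5 b1 b2 pγ qγ s K3 K4 K5 : ℝ)
    (hk3 : 0 < k3) (hk4 : 0 < k4) (hk5 : 0 < k5)
    (hb1 : 0 < b1) (hb2 : 0 < b2) (hpγ : 0 < pγ) (hqγ : 0 < qγ) (hs : 0 < s)
    (hK3 : k3 ≤ K3) (hK4 : k4 ≤ K4) (hK5 : k5 ≤ K5)
    (hkey : b1*pγ*k5 + b2*s + b2*qγ*k4 < k3*k4*k5) :
    0 < K3*K4 + K3*K5 + K4*K5 - b1*pγ - b2*qγ ∧
    0 < K3*K4*K5 - b1*pγ*K5 - b2*s - b2*qγ*K4 ∧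
    K3*K4*K5 - b1*pγ*K5 - b2*s - b2*qγ*K4
      < (K3+K4+K5)*(K3*K4 + K3*K5 + K4*K5 - b1*pγ - b2*qγ) := by
  have hK3p : 0 < K3 := lt_of_lt_of_le hk3 hK3
  have hK4p : 0 < K4 := lt_of_lt_of_le hk4 hK4
  have hK5p : 0 < K5 := lt_of_lt_of_le hk5 hK5
  have h34 : k3*k4 ≤ K3*K4 := mul_le_mul hK3 hK4 hk4.le hK3p.le
  have h35 : k3*k5 ≤ K3*K5 := mul_le_mul hK3 hK5 hk5.le hK3p.le
  have h1 : b1*pγ < k3*k4 := by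
    have h : (b1*pγ)*k5 < (k3*k4)*k5 := by
      nlinarith [mul_pos hb2 hs, mul_pos (mul_pos hb2 hqγ) hk4]
    exact lt_of_mul_lt_mul_right h hk5.le
  have h2 : b2*qγ < k3*k5 := by
    have h : (b2*qγ)*k4 < (k3*k5)*k4 := by
      nlinarith [mul_pos hb2 hs, mul_pos (mul_pos hb1 hpγ) hk5]
    exact lt_of_mul_lt_mul_right h hk4.le
  refine ⟨by nlinarith [mul_pos hK4p hK5p], ?_, ?_⟩
  · have t1 : (k3*k4 - b1*pγ)*(K5 - k5) ≥ 0 :=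
      mul_nonneg (by linarith) (by linarith)
    have t2 : (k3*k5 - b2*qγ)*(K4 - k4) ≥ 0 :=
      mul_nonneg (by linarith) (by linarith)
    have t3 : k3*((K4-k4)*(K5-k5)) ≥ 0 :=
      mul_nonneg hk3.le (mul_nonneg (by linarith) (by linarith))
    have t4 : (K3-k3)*(K4*K5) ≥ 0 :=
      mul_nonneg (by linarith) (mul_pos hK4p hK5p).le
    nlinarith [t1, t2, t3, t4]
  · have u1 : 0 < (K3*K4 - b1*pγ)*(K3+K4) :=
      mul_pos (by linarith) (by linarith)
    have u2 : 0 < (K3*K5 - b2*qγ)*(K3+K5) :=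
      mul_pos (by linarith) (by linarith)
    nlinarith [u1, u2, mul_pos (mul_pos hK4p hK4p) hK5p,
      mul_pos (mul_pos hK4p hK5p) hK5p, mul_pos (mul_pos hK3p hK4p) hK5p,
      mul_pos hb2 hs]

/-- Local asymptotic stability of the DFE for the linearized reaction-diffusion
COVID-19 model: if `R_c < 1`, then for every eigenvalue `ψ ≥ 0` of `-Δ` (Neumann),
every complex eigenvalue of `J(E0) - ψ Υ` has strictly negative real part, where
`Υ = diag(κs, κv, κe, κa, κi, κr)`. -/
theorem dfe_locally_asymptotically_stable_pde
    (Λ μ β η γ σ θ δ c1 c2 r1 r2 p q a1 a2 φ1 φ2 : ℝ)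
    (hΛ : 0 < Λ) (hμ : 0 < μ) (hβ : 0 < β) (hη : 0 < η) (hγ : 0 < γ)
    (hσ : 0 < σ) (hθ : 0 < θ) (hδ : 0 < δ) (hc1 : 0 < c1) (hc2 : 0 < c2)
    (hr1 : 0 < r1) (hr1' : r1 < 1) (hr2 : 0 < r2) (hr2' : r2 < 1)
    (hp : 0 < p) (hp' : p < 1) (hq : 0 < q) (hq' : q < 1)
    (ha1 : 0 < a1) (ha1' : a1 < 1) (ha2 : 0 < a2) (ha2' : a2 < 1)
    (hr12 : r1 + r2 = 1) (hpq : p + q = 1) (ha12 : a1 + a2 = 1)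
    (hφ1 : 0 ≤ φ1) (hφ1' : φ1 ≤ 1) (hφ2 : 0 ≤ φ2) (hφ2' : φ2 ≤ 1)
    (k1 k2 k3 k4 k5 k6 S0 V0 N0 N1 Rc : ℝ)
    (hk1 : k1 = c1 + μ) (hk2 : k2 = c2 + μ) (hk3 : k3 = μ + γ)
    (hk4 : k4 = μ + σ) (hk5 : k5 = μ + δ + θ) (hk6 : k6 = k1 * k2 - c1 * c2)
    (hS0 : S0 = (c2 * r2 + r1 * k2) * Λ / k6)
    (hV0 : V0 = (k1 * r2 + c1 * r1) * Λ / k6)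
    (hN0 : N0 = S0 + V0) (hN1 : N1 = S0 + φ1 * V0)
    (hRc : Rc = N1 * β * η * γ * (a2 * p * σ + k4 * q) / (N0 * k3 * k4 * k5)
        + N1 * β * p * γ / (N0 * k3 * k4))
    (J : Matrix (Fin 6) (Fin 6) ℝ)
    (hJ : J = !![-k1, c2, 0, -(β * S0 / N0), -(β * η * S0 / N0), 0;
                 c1, -k2, 0, -(β * φ1 * V0 / N0), -(β * η * φ1 * V0 / N0), 0;
                 0, 0, -k3, β * N1 / N0, β * η * N1 / N0, 0;
                 0, 0, p * γ, -k4, 0, 0;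
                 0, 0, q * γ, a2 * σ, -k5, 0;
                 0, 0, 0, a1 * σ, θ, -μ])
    (κs κv κe κa κi κr : ℝ)
    (hκs : 0 < κs) (hκv : 0 < κv) (hκe : 0 < κe)
    (hκa : 0 < κa) (hκi : 0 < κi) (hκr : 0 < κr)
    (Υ : Matrix (Fin 6) (Fin 6) ℝ)
    (hΥ : Υ = Matrix.diagonal ![κs, κv, κe, κa, κi, κr])
    (hRclt : Rc < 1) :
    ∀ ψ : ℝ, 0 ≤ ψ →
      ∀ z ∈ spectrum ℂ ((J - ψ • Υ).map (Complex.ofReal)), z.re < 0 := by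
  -- positivity preliminaries
  have hk1p : 0 < k1 := by rw [hk1]; linarith
  have hk2p : 0 < k2 := by rw [hk2]; linarith
  have hk3p : 0 < k3 := by rw [hk3]; linarith
  have hk4p : 0 < k4 := by rw [hk4]; linarith
  have hk5p : 0 < k5 := by rw [hk5]; linarith
  have hk6p : 0 < k6 := by
    have : k6 = μ*(c1+c2+μ) := by rw [hk6, hk1, hk2]; ring
    rw [this]; positivity
  have hS0p : 0 < S0 := by
    rw [hS0]
    apply div_pos _ hk6p
    exact mul_pos (add_pos (mul_pos hc2 hr2) (mul_pos hr1 hk2p)) hΛ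
  have hV0p : 0 < V0 := by
    rw [hV0]
    apply div_pos _ hk6p
    exact mul_pos (add_pos (mul_pos hk1p hr2) (mul_pos hc1 hr1)) hΛ
  have hN0p : 0 < N0 := by rw [hN0]; linarith
  have hN1p : 0 < N1 := by
    rw [hN1]
    have := mul_nonneg hφ1 hV0p.le
    linarith
  have hb1p : 0 < β*N1/N0 := by positivity
  have hb2p : 0 < β*η*N1/N0 := by positivity
  -- key inequality from Rc < 1
  have hkey : (β*N1/N0)*(p*γ)*k5 + (β*η*N1/N0)*(p*γ*(a2*σ))
      + (β*η*N1/N0)*(q*γ)*k4 < k3*k4*k5 := by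
    have e : Rc * (k3*k4*k5) = (β*N1/N0)*(p*γ)*k5 + (β*η*N1/N0)*(p*γ*(a2*σ))
        + (β*η*N1/N0)*(q*γ)*k4 := by
      rw [hRc]
      field_simp
      ring
    calc (β*N1/N0)*(p*γ)*k5 + (β*η*N1/N0)*(p*γ*(a2*σ)) + (β*η*N1/N0)*(q*γ)*k4
        = Rc * (k3*k4*k5) := e.symm
      _ < 1 * (k3*k4*k5) := by
          apply mul_lt_mul_of_pos_right hRclt
          positivity
      _ = k3*k4*k5 := one_mul _
  have hΥex : Υ = !![κs,0,0,0,0,0; 0,κv,0,0,0,0; 0,0,κe,0,0,0;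
      0,0,0,κa,0,0; 0,0,0,0,κi,0; 0,0,0,0,0,κr] := by
    subst hΥ
    ext i j
    fin_cases i <;> fin_cases j <;> simp [Matrix.diagonal, Matrix.vecHead, Matrix.vecTail]
  intro ψ hψ z hz
  -- eigenvalue gives vanishing determinant
  have hdet : (algebraMap ℂ (Matrix (Fin 6) (Fin 6) ℂ) z
      - (J - ψ • Υ).map (Complex.ofReal)).det = 0 := by
    rw [spectrum.mem_iff] at hz
    by_contra hne
    exact hz ((Matrix.isUnit_iff_isUnit_det _).mpr (isUnit_iff_ne_zero.mpr hne))
  -- explicit form of the matrix z•1 - (J - ψΥ)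
  have hM : algebraMap ℂ (Matrix (Fin 6) (Fin 6) ℂ) z
      - (J - ψ • Υ).map (Complex.ofReal) =
      !![z + ((k1 + ψ*κs : ℝ) : ℂ), -(c2:ℂ), 0, ((β*S0/N0 : ℝ) : ℂ), ((β*η*S0/N0 : ℝ) : ℂ), 0;
         -(c1:ℂ), z + ((k2 + ψ*κv : ℝ) : ℂ), 0, ((β*φ1*V0/N0 : ℝ) : ℂ), ((β*η*φ1*V0/N0 : ℝ) : ℂ), 0;
         0, 0, z + ((k3 + ψ*κe : ℝ) : ℂ), -((β*N1/N0 : ℝ) : ℂ), -((β*η*N1/N0 : ℝ) : ℂ), 0;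
         0, 0, -((p*γ : ℝ) : ℂ), z + ((k4 + ψ*κa : ℝ) : ℂ), 0, 0;
         0, 0, -((q*γ : ℝ) : ℂ), -((a2*σ : ℝ) : ℂ), z + ((k5 + ψ*κi : ℝ) : ℂ), 0;
         0, 0, 0, -((a1*σ : ℝ) : ℂ), -(θ:ℂ), z + ((μ + ψ*κr : ℝ) : ℂ)] := by
    subst hJ
    rw [hΥex]
    ext i j
    fin_cases i <;> fin_cases j <;>
      simp [Matrix.algebraMap_matrix_apply, Matrix.sub_apply, Matrix.smul_apply,
        Matrix.map_apply, smul_eq_mul, Matrix.vecHead, Matrix.vecTail] <;>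
      push_cast <;> ring
  rw [hM] at hdet
  -- factor the characteristic determinant
  have hfact : Matrix.det
      !![z + ((k1 + ψ*κs : ℝ) : ℂ), -(c2:ℂ), 0, ((β*S0/N0 : ℝ) : ℂ), ((β*η*S0/N0 : ℝ) : ℂ), 0;
         -(c1:ℂ), z + ((k2 + ψ*κv : ℝ) : ℂ), 0, ((β*φ1*V0/N0 : ℝ) : ℂ), ((β*η*φ1*V0/N0 : ℝ) : ℂ), 0;
         0, 0, z + ((k3 + ψ*κe : ℝ) : ℂ), -((β*N1/N0 : ℝ) : ℂ), -((β*η*N1/N0 : ℝ) : ℂ), 0;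
         0, 0, -((p*γ : ℝ) : ℂ), z + ((k4 + ψ*κa : ℝ) : ℂ), 0, 0;
         0, 0, -((q*γ : ℝ) : ℂ), -((a2*σ : ℝ) : ℂ), z + ((k5 + ψ*κi : ℝ) : ℂ), 0;
         0, 0, 0, -((a1*σ : ℝ) : ℂ), -(θ:ℂ), z + ((μ + ψ*κr : ℝ) : ℂ)] =
      (z + ((μ + ψ*κr : ℝ) : ℂ)) *
      ((z + ((k1 + ψ*κs : ℝ) : ℂ)) * (z + ((k2 + ψ*κv : ℝ) : ℂ)) - (c1:ℂ)*(c2:ℂ)) *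
      ((z + ((k3 + ψ*κe : ℝ) : ℂ)) * (z + ((k4 + ψ*κa : ℝ) : ℂ)) * (z + ((k5 + ψ*κi : ℝ) : ℂ))
        - ((β*N1/N0 : ℝ) : ℂ) * ((p*γ : ℝ) : ℂ) * (z + ((k5 + ψ*κi : ℝ) : ℂ))
        - ((β*η*N1/N0 : ℝ) : ℂ) * (((p*γ : ℝ) : ℂ) * ((a2*σ : ℝ) : ℂ)
            + ((q*γ : ℝ) : ℂ) * (z + ((k4 + ψ*κa : ℝ) : ℂ)))) := by
    simp [Matrix.det_succ_row_zero, Fin.sum_univ_succ, Fin.succAbove,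
      Fin.castSucc, Fin.castAdd, Fin.castLE, Matrix.cons_val_zero, Matrix.cons_val_one,
      Matrix.head_cons, Matrix.cons_val_succ]
    ring
  rw [hfact] at hdet
  rcases mul_eq_zero.mp hdet with h12 | hcub
  · rcases mul_eq_zero.mp h12 with hlin | hquad
    · -- z = -(μ + ψ κr)
      have hz' : z = -((μ + ψ*κr : ℝ) : ℂ) := by linear_combination hlin
      rw [hz']
      simp only [Complex.neg_re, Complex.ofReal_re]
      have := mul_nonneg hψ hκr.le
      linarith
    · -- quadratic factor
      have hT : 0 < (k1 + ψ*κs) + (k2 + ψ*κv) := by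
        have h1 := mul_nonneg hψ hκs.le
        have h2 := mul_nonneg hψ hκv.le
        linarith
      have hc12 : c1*c2 < k1*k2 := by
        have e : k1*k2 = c1*c2 + μ*(c1+c2+μ) := by rw [hk1, hk2]; ring
        have h := mul_pos hμ (show (0:ℝ) < c1+c2+μ by linarith)
        linarith [e ▸ le_refl (k1*k2)]
      have hD : 0 < (k1 + ψ*κs) * (k2 + ψ*κv) - c1*c2 := by
        have e : (k1 + ψ*κs) * (k2 + ψ*κv)
            = k1*k2 + (ψ*κs)*k2 + (ψ*κv)*k1 + (ψ*κs)*(ψ*κv) := by ring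
        have h1 := mul_nonneg (mul_nonneg hψ hκs.le) hk2p.le
        have h2 := mul_nonneg (mul_nonneg hψ hκv.le) hk1p.le
        have h3 := mul_nonneg (mul_nonneg hψ hκs.le) (mul_nonneg hψ hκv.le)
        linarith [e ▸ le_refl ((k1 + ψ*κs) * (k2 + ψ*κv))]
      refine quad_root_re_neg' ((k1 + ψ*κs) + (k2 + ψ*κv))
        ((k1 + ψ*κs) * (k2 + ψ*κv) - c1*c2) hT hD z ?_
      push_cast at hquad ⊢
      linear_combination hquad
  · -- cubic factor
    have hK3 : k3 ≤ k3 + ψ*κe := by have := mul_nonneg hψ hκe.le; linarith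
    have hK4 : k4 ≤ k4 + ψ*κa := by have := mul_nonneg hψ hκa.le; linarith
    have hK5 : k5 ≤ k5 + ψ*κi := by have := mul_nonneg hψ hκi.le; linarith
    obtain ⟨hB, hC, hABC⟩ := RH_coeffs' k3 k4 k5 (β*N1/N0) (β*η*N1/N0)
      (p*γ) (q*γ) (p*γ*(a2*σ)) (k3 + ψ*κe) (k4 + ψ*κa) (k5 + ψ*κi)
      hk3p hk4p hk5p hb1p hb2p (mul_pos hp hγ) (mul_pos hq hγ)
      (mul_pos (mul_pos hp hγ) (mul_pos ha2 hσ)) hK3 hK4 hK5 hkey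
    have hA : 0 < (k3 + ψ*κe) + (k4 + ψ*κa) + (k5 + ψ*κi) := by linarith
    refine cubic_root_re_neg'
      ((k3 + ψ*κe) + (k4 + ψ*κa) + (k5 + ψ*κi))
      ((k3 + ψ*κe)*(k4 + ψ*κa) + (k3 + ψ*κe)*(k5 + ψ*κi) + (k4 + ψ*κa)*(k5 + ψ*κi)
        - (β*N1/N0)*(p*γ) - (β*η*N1/N0)*(q*γ))
      ((k3 + ψ*κe)*(k4 + ψ*κa)*(k5 + ψ*κi) - (β*N1/N0)*(p*γ)*(k5 + ψ*κi)
        - (β*η*N1/N0)*(p*γ*(a2*σ)) - (β*η*N1/N0)*(q*γ)*(k4 + ψ*κa))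
      hA hB hC (by linarith) z ?_
    push_cast at hcub ⊢
    linear_combination hcub
end
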